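/- arXiv:1005.2791 — 5 statements merged into one kernel-verified Lean document; each statement's English description precedes it below -/
import Mathlib

section
/- Let X_1,…,X_n ∈ {0,1} be independent random variables and let f : 2^[n] → ℝ₊ be a non-negative submodular set function (not necessarily monotone) with all marginal values in [−1,1], and set Z = f(X_1,…,X_n). Then for every δ > 0, Pr[Z ≥ (1+δ) E[Z]] ≤ e^{−δ² E[Z] / (4 + 5δ/3)}. -/
open Finset Real Function

namespace SubmodTail

variable {n : ℕ} {f : Finset (Fin n) → ℝ}

lemma marg_mono (hsub : ∀ A B : Finset (Fin n), f (A ∪ B) + f (A ∩ B) ≤ f A + f B)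
    {A B : Finset (Fin n)} {j : Fin n} (hAB : A ⊆ B) (hj : j ∉ B) :
    f (insert j B) - f B ≤ f (insert j A) - f A := by
  have h := hsub (insert j A) B
  have h1 : insert j A ∪ B = insert j B := by
    ext k; simp only [mem_union, mem_insert]; tauto
  have h2 : insert j A ∩ B = A := by
    ext k
    simp only [mem_inter, mem_insert]
    constructor
    · rintro ⟨h | h, hk⟩
      · exact absurd (h ▸ hk) hj
      · exact h
    · intro hk; exact ⟨Or.inr hk, hAB hk⟩
  rw [h1, h2] at h
  linarith

lemma tele_erase (hsub : ∀ A B : Finset (Fin n), f (A ∪ B) + f (A ∩ B) ≤ f A + f B)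
    (T : Finset (Fin n)) : ∀ A : Finset (Fin n), T ⊆ A →
    ∑ i ∈ T, (f A - f (A.erase i)) ≤ f A - f (A \ T) := by
  induction T using Finset.induction with
  | empty => intro A _; simp
  | @insert i T hiT ih =>
    intro A hTA
    have hiA : i ∈ A := hTA (mem_insert_self i T)
    have hT'A : T ⊆ A := (subset_insert i T).trans hTA
    rw [Finset.sum_insert hiT]
    have key : f A - f (A.erase i) ≤ f (A \ T) - f ((A \ T).erase i) := by
      have h1 : (A \ T).erase i ⊆ A.erase i := by
        intro k hk
        simp only [mem_erase, mem_sdiff] at hk ⊢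
        exact ⟨hk.1, hk.2.1⟩
      have h2 : i ∉ A.erase i := notMem_erase i A
      have h3 : insert i (A.erase i) = A := insert_erase hiA
      have h4 : insert i ((A \ T).erase i) = A \ T := by
        apply insert_erase
        simp only [mem_sdiff]
        exact ⟨hiA, hiT⟩
      have := marg_mono hsub h1 h2
      rw [h3, h4] at this
      linarith
    have h5 : A \ insert i T = (A \ T).erase i := by
      ext k; simp only [mem_erase, mem_sdiff, mem_insert]; tauto
    have := ih A hT'A
    rw [h5]
    linarith

lemma tele_insert (hsub : ∀ A B : Finset (Fin n), f (A ∪ B) + f (A ∩ B) ≤ f A + f B)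
    (T : Finset (Fin n)) : ∀ A : Finset (Fin n), Disjoint T A →
    ∑ i ∈ T, (f A - f (insert i A)) ≤ f A - f (A ∪ T) := by
  induction T using Finset.induction with
  | empty => intro A _; simp
  | @insert i T hiT ih =>
    intro A hdisj
    have hiA : i ∉ A := by
      have := Finset.disjoint_left.mp hdisj (mem_insert_self i T)
      exact this
    have hT'A : Disjoint T A := disjoint_of_subset_left (subset_insert i T) hdisj
    rw [Finset.sum_insert hiT]
    have hiAT : i ∉ A ∪ T := by
      simp only [mem_union]
      push_neg
      exact ⟨hiA, hiT⟩
    have key : f A - f (insert i A) ≤ f (A ∪ T) - f (insert i (A ∪ T)) := by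
      have := marg_mono hsub (subset_union_left (s₁ := A) (s₂ := T)) hiAT
      linarith
    have h5 : A ∪ insert i T = insert i (A ∪ T) := by
      ext k; simp only [mem_union, mem_insert]; tauto
    have := ih A hT'A
    rw [h5]
    linarith


variable {n : ℕ}

/-- Set of true coordinates. -/
def Ax (x : Fin n → Bool) : Finset (Fin n) := univ.filter (fun i => x i = true)

def gOf (f : Finset (Fin n) → ℝ) (x : Fin n → Bool) : ℝ := f (Ax x)

/-- Deficiency along coordinate `i`. -/
def Dg (g : (Fin n → Bool) → ℝ) (i : Fin n) (x : Fin n → Bool) : ℝ :=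
  g x - min (g (update x i true)) (g (update x i false))

lemma Ax_update_true (x : Fin n → Bool) (i : Fin n) :
    Ax (update x i true) = insert i (Ax x) := by
  ext k
  simp only [Ax, mem_filter, mem_univ, true_and, mem_insert]
  rcases eq_or_ne k i with rfl | hk
  · simp
  · simp [update_of_ne hk, hk]

lemma Ax_update_false (x : Fin n → Bool) (i : Fin n) :
    Ax (update x i false) = (Ax x).erase i := by
  ext k
  simp only [Ax, mem_filter, mem_univ, true_and, mem_erase]
  rcases eq_or_ne k i with rfl | hk
  · simp
  · simp [update_of_ne hk, hk]

lemma update_self_of_true {x : Fin n → Bool} {i : Fin n} (h : x i = true) :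
    update x i true = x := by
  funext k; rcases eq_or_ne k i with rfl | hk
  · simp [h]
  · simp [update_of_ne hk]

lemma update_self_of_false {x : Fin n → Bool} {i : Fin n} (h : x i = false) :
    update x i false = x := by
  funext k; rcases eq_or_ne k i with rfl | hk
  · simp [h]
  · simp [update_of_ne hk]

lemma Dg_nonneg (g : (Fin n → Bool) → ℝ) (i : Fin n) (x : Fin n → Bool) :
    0 ≤ Dg g i x := by
  unfold Dg
  rcases Bool.eq_false_or_eq_true (x i) with h | h
  · rw [update_self_of_true h]
    have := min_le_left (g x) (g (update x i false))
    linarith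
  · rw [update_self_of_false h]
    have := min_le_right (g (update x i true)) (g x)
    linarith

lemma Dg_update_self (g : (Fin n → Bool) → ℝ) (i : Fin n) (x : Fin n → Bool) (b : Bool) :
    Dg g i (update x i b) = g (update x i b)
      - min (g (update x i true)) (g (update x i false)) := by
  unfold Dg
  rw [update_idem, update_idem]

variable {f : Finset (Fin n) → ℝ}

lemma Dg_le_one (hmarg : ∀ (A : Finset (Fin n)) (j : Fin n), |f (insert j A) - f A| ≤ 1)
    (i : Fin n) (x : Fin n → Bool) : Dg (gOf f) i x ≤ 1 := by
  unfold Dg gOf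
  rw [Ax_update_true, Ax_update_false]
  have key : f (Ax x) - 1 ≤ min (f (insert i (Ax x))) (f ((Ax x).erase i)) := by
    apply le_min
    · rcases Bool.eq_false_or_eq_true (x i) with h | h
      · -- x i = true : insert i (Ax x) = Ax x
        have hiA : i ∈ Ax x := by simp [Ax, h]
        rw [insert_eq_self.mpr hiA]; linarith
      · have hiA : i ∉ Ax x := by simp [Ax, h]
        have hm := hmarg (Ax x) i
        rw [abs_le] at hm
        linarith [hm.1]
    · rcases Bool.eq_false_or_eq_true (x i) with h | h
      · have hiA : i ∈ Ax x := by simp [Ax, h]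
        have hm := hmarg ((Ax x).erase i) i
        rw [insert_erase hiA, abs_le] at hm
        linarith [hm.2]
      · have hiA : i ∉ Ax x := by simp [Ax, h]
        rw [erase_eq_of_notMem hiA]; linarith
  linarith

/-- Self-bounding property: `∑ i, Dg i x ≤ 2 g x`. -/
lemma Dg_sum_le (hnonneg : ∀ A : Finset (Fin n), 0 ≤ f A)
    (hsub : ∀ A B : Finset (Fin n), f (A ∪ B) + f (A ∩ B) ≤ f A + f B)
    (x : Fin n → Bool) : ∑ i : Fin n, Dg (gOf f) i x ≤ 2 * gOf f x := by
  classical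
  set A : Finset (Fin n) := Ax x with hA
  have hval : ∀ i : Fin n, Dg (gOf f) i x =
      if i ∈ A then max 0 (f A - f (A.erase i)) else max 0 (f A - f (insert i A)) := by
    intro i
    unfold Dg gOf
    rw [Ax_update_true, Ax_update_false, ← hA]
    by_cases hi : i ∈ A
    · have hxi : x i = true := by
        have := hi; simp only [hA, Ax, mem_filter] at this; exact this.2
      have hins : update x i true = x := update_self_of_true hxi
      have : gOf f (update x i true) = f A := by rw [hins]; rfl
      rw [if_pos hi, insert_eq_self.mpr hi]
      rcases le_total (f A) (f (A.erase i)) with hc | hc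
      · rw [min_eq_left hc, max_eq_left (by linarith)]; ring
      · rw [min_eq_right hc, max_eq_right (by linarith)]
    · have he : A.erase i = A := erase_eq_of_notMem hi
      rw [if_neg hi, he]
      rcases le_total (f (insert i A)) (f A) with hc | hc
      · rw [min_eq_left hc, max_eq_right (by linarith)]
      · rw [min_eq_right hc, max_eq_left (by linarith)]; ring
  rw [Finset.sum_congr rfl (fun i _ => hval i)]
  rw [← Finset.sum_filter_add_sum_filter_not univ (· ∈ A)]
  have hfA : univ.filter (· ∈ A) = A := by
    ext k; simp
  have part1 : ∑ i ∈ univ.filter (· ∈ A),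
      (if i ∈ A then max 0 (f A - f (A.erase i)) else max 0 (f A - f (insert i A))) ≤ f A := by
    rw [hfA]
    have : ∀ i ∈ A, (if i ∈ A then max 0 (f A - f (A.erase i))
        else max 0 (f A - f (insert i A))) = max 0 (f A - f (A.erase i)) := by
      intro i hi; rw [if_pos hi]
    rw [Finset.sum_congr rfl this]
    set T := A.filter (fun i => 0 < f A - f (A.erase i)) with hT
    rw [← Finset.sum_filter_add_sum_filter_not A (fun i => 0 < f A - f (A.erase i))]
    have e1 : ∑ i ∈ T, max 0 (f A - f (A.erase i)) = ∑ i ∈ T, (f A - f (A.erase i)) := by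
      apply Finset.sum_congr rfl
      intro i hi
      rw [hT, mem_filter] at hi
      exact max_eq_right hi.2.le
    have e2 : ∑ i ∈ A.filter (fun i => ¬ 0 < f A - f (A.erase i)),
        max 0 (f A - f (A.erase i)) = 0 := by
      apply Finset.sum_eq_zero
      intro i hi
      rw [mem_filter] at hi
      exact max_eq_left (by push_neg at hi; linarith [hi.2])
    rw [e1, e2, add_zero]
    have := tele_erase hsub T A (filter_subset _ _)
    have := hnonneg (A \ T)
    linarith
  have part2 : ∑ i ∈ univ.filter (¬ · ∈ A),
      (if i ∈ A then max 0 (f A - f (A.erase i)) else max 0 (f A - f (insert i A))) ≤ f A := by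
    have : ∀ i ∈ univ.filter (¬ · ∈ A), (if i ∈ A then max 0 (f A - f (A.erase i))
        else max 0 (f A - f (insert i A))) = max 0 (f A - f (insert i A)) := by
      intro i hi; rw [mem_filter] at hi; rw [if_neg hi.2]
    rw [Finset.sum_congr rfl this]
    set B := univ.filter (¬ · ∈ A) with hB
    set T := B.filter (fun i => 0 < f A - f (insert i A)) with hT
    rw [← Finset.sum_filter_add_sum_filter_not B (fun i => 0 < f A - f (insert i A))]
    have e1 : ∑ i ∈ T, max 0 (f A - f (insert i A)) = ∑ i ∈ T, (f A - f (insert i A)) := by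
      apply Finset.sum_congr rfl
      intro i hi
      rw [hT, mem_filter] at hi
      exact max_eq_right hi.2.le
    have e2 : ∑ i ∈ B.filter (fun i => ¬ 0 < f A - f (insert i A)),
        max 0 (f A - f (insert i A)) = 0 := by
      apply Finset.sum_eq_zero
      intro i hi
      rw [mem_filter] at hi
      exact max_eq_left (by push_neg at hi; linarith [hi.2])
    rw [e1, e2, add_zero]
    have hdisj : Disjoint T A := by
      rw [Finset.disjoint_left]
      intro i hi
      rw [hT, mem_filter, hB, mem_filter] at hi
      exact hi.1.2
    have := tele_insert hsub T A hdisj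
    have := hnonneg (A ∪ T)
    linarith
  have : gOf f x = f A := rfl
  rw [this]
  linarith


variable {n : ℕ}

def wP (bw : Fin n → Bool → ℝ) (x : Fin n → Bool) : ℝ := ∏ i, bw i (x i)

def Ew (bw : Fin n → Bool → ℝ) (h : (Fin n → Bool) → ℝ) : ℝ :=
  ∑ x : Fin n → Bool, wP bw x * h x

def Ti (bw : Fin n → Bool → ℝ) (i : Fin n) (h : (Fin n → Bool) → ℝ) :
    (Fin n → Bool) → ℝ :=
  fun x => bw i true * h (update x i true) + bw i false * h (update x i false)

variable {bw : Fin n → Bool → ℝ}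

lemma wP_nonneg (hbw0 : ∀ i b, 0 ≤ bw i b) (x : Fin n → Bool) : 0 ≤ wP bw x :=
  Finset.prod_nonneg fun i _ => hbw0 i (x i)

lemma sum_wP (hbw1 : ∀ i, bw i true + bw i false = 1) :
    ∑ x : Fin n → Bool, wP bw x = 1 := by
  unfold wP
  rw [← Fintype.piFinset_univ, ← Finset.prod_univ_sum]
  rw [Finset.prod_eq_one]
  intro i _
  rw [Fintype.sum_bool]
  exact hbw1 i

lemma wP_update_mul (x : Fin n → Bool) (i : Fin n) (b : Bool) :
    wP bw (update x i b) * bw i (x i) = wP bw x * bw i b := by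
  unfold wP
  rw [← Finset.mul_prod_erase univ (fun j => bw j (update x i b j)) (mem_univ i),
      ← Finset.mul_prod_erase univ (fun j => bw j (x j)) (mem_univ i)]
  have : ∀ j ∈ univ.erase i, bw j (update x i b j) = bw j (x j) := by
    intro j hj
    rw [mem_erase] at hj
    rw [update_of_ne hj.1]
  rw [Finset.prod_congr rfl this]
  simp only [update_self]
  ring

lemma Ew_Ti (hbw1 : ∀ i, bw i true + bw i false = 1) (i : Fin n)
    (h : (Fin n → Bool) → ℝ) : Ew bw (Ti bw i h) = Ew bw h := by
  unfold Ew Ti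
  have step1 : ∑ x : Fin n → Bool, wP bw x *
      (bw i true * h (update x i true) + bw i false * h (update x i false))
      = ∑ p : (Fin n → Bool) × Bool, wP bw p.1 * bw i p.2 * h (update p.1 i p.2) := by
    rw [Fintype.sum_prod_type]
    apply Finset.sum_congr rfl
    intro x _
    rw [Fintype.sum_bool]
    ring
  rw [step1]
  have hinv : Function.Involutive
      (fun p : (Fin n → Bool) × Bool => (update p.1 i p.2, p.1 i)) := by
    rintro ⟨x, b⟩
    simp only [update_self, update_idem]
    rw [update_eq_self i x]
  have step2 : ∑ p : (Fin n → Bool) × Bool, wP bw p.1 * bw i p.2 * h (update p.1 i p.2)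
      = ∑ p : (Fin n → Bool) × Bool, wP bw p.1 * bw i p.2 * h p.1 := by
    apply Fintype.sum_bijective
      (fun p : (Fin n → Bool) × Bool => (update p.1 i p.2, p.1 i)) hinv.bijective
    rintro ⟨x, b⟩
    simp only
    rw [wP_update_mul x i b]
  rw [step2, Fintype.sum_prod_type]
  apply Finset.sum_congr rfl
  intro x _
  rw [Fintype.sum_bool]
  linear_combination (wP bw x * h x) * (hbw1 i)


/-- Two-point entropy functional. -/
noncomputable def e2 (q q' a b : ℝ) : ℝ :=
  q * (a * Real.log a) + q' * (b * Real.log b)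
    - (q * a + q' * b) * Real.log (q * a + q' * b)

lemma young {s : ℝ} (t : ℝ) (hs : 0 ≤ s) : s * t ≤ s * Real.log s - s + Real.exp t := by
  rcases eq_or_lt_of_le hs with rfl | hs
  · simp [Real.exp_pos t |>.le]
  · have h1 : t - Real.log s + 1 ≤ Real.exp (t - Real.log s) := Real.add_one_le_exp _
    have h2 : Real.exp (t - Real.log s) = Real.exp t / s := by
      rw [Real.exp_sub, Real.exp_log hs]
    rw [h2] at h1
    have h3 := mul_le_mul_of_nonneg_left h1 hs.le
    rw [mul_div_cancel₀ _ hs.ne'] at h3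
    nlinarith

lemma e2_dual {q q' a b u v : ℝ} (hq : 0 ≤ q) (hq' : 0 ≤ q') (ha : 0 < a) (hb : 0 < b)
    (hT : 0 < q * a + q' * b) (huv : q * Real.exp u + q' * Real.exp v ≤ 1) :
    q * a * u + q' * b * v ≤ e2 q q' a b := by
  set T := q * a + q' * b with hTdef
  have hau : a * (u + Real.log T) ≤ a * Real.log a - a + Real.exp u * T := by
    have := young (s := a) (u + Real.log T) ha.le
    rwa [Real.exp_add, Real.exp_log hT] at this
  have hbv : b * (v + Real.log T) ≤ b * Real.log b - b + Real.exp v * T := by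
    have := young (s := b) (v + Real.log T) hb.le
    rwa [Real.exp_add, Real.exp_log hT] at this
  have h1 := mul_le_mul_of_nonneg_left hau hq
  have h2 := mul_le_mul_of_nonneg_left hbv hq'
  have h3 := mul_le_mul_of_nonneg_left huv hT.le
  unfold e2
  nlinarith

lemma T_pos {q q' a b : ℝ} (hq : 0 ≤ q) (hq' : 0 ≤ q') (hqq : q + q' = 1)
    (ha : 0 < a) (hb : 0 < b) : 0 < q * a + q' * b := by
  rcases eq_or_lt_of_le hq with rfl | hq2
  · simp only [zero_mul, zero_add]; nlinarith
  · nlinarith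

lemma e2_nonneg {q q' a b : ℝ} (hq : 0 ≤ q) (hq' : 0 ≤ q') (hqq : q + q' = 1)
    (ha : 0 < a) (hb : 0 < b) : 0 ≤ e2 q q' a b := by
  have := e2_dual (u := 0) (v := 0) hq hq' ha hb (T_pos hq hq' hqq ha hb)
    (by simp [Real.exp_zero]; linarith)
  simpa using this

lemma e2_self {q q' a : ℝ} (hqq : q + q' = 1) : e2 q q' a a = 0 := by
  unfold e2
  have : q * a + q' * a = a := by linear_combination a * hqq
  rw [this]
  linear_combination (a * Real.log a) * hqq

lemma e2_convex2 {q q' r r' a1 a2 b1 b2 : ℝ} (hq : 0 ≤ q) (hq' : 0 ≤ q') (hqq : q + q' = 1)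
    (hr : 0 ≤ r) (hr' : 0 ≤ r') (hrr : r + r' = 1)
    (ha1 : 0 < a1) (ha2 : 0 < a2) (hb1 : 0 < b1) (hb2 : 0 < b2) :
    e2 q q' (r * a1 + r' * a2) (r * b1 + r' * b2)
      ≤ r * e2 q q' a1 b1 + r' * e2 q q' a2 b2 := by
  set abar := r * a1 + r' * a2 with habar
  set bbar := r * b1 + r' * b2 with hbbar
  have habar0 : 0 < abar := by
    rcases eq_or_lt_of_le hr with rfl | hr2
    · simp only [habar, zero_mul, zero_add]; nlinarith
    · nlinarith
  have hbbar0 : 0 < bbar := by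
    rcases eq_or_lt_of_le hr with rfl | hr2
    · simp only [hbbar, zero_mul, zero_add]; nlinarith
    · nlinarith
  have hT : 0 < q * abar + q' * bbar := T_pos hq hq' hqq habar0 hbbar0
  set T := q * abar + q' * bbar with hTdef
  set u := Real.log (abar / T) with hu
  set v := Real.log (bbar / T) with hv
  have hexpu : Real.exp u = abar / T := Real.exp_log (by positivity)
  have hexpv : Real.exp v = bbar / T := Real.exp_log (by positivity)
  have hsum : q * Real.exp u + q' * Real.exp v ≤ 1 := by
    rw [hexpu, hexpv]
    have : q * (abar / T) + q' * (bbar / T) = (q * abar + q' * bbar) / T := by ring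
    rw [this, ← hTdef, div_self hT.ne']
  have heq : e2 q q' abar bbar = q * abar * u + q' * bbar * v := by
    unfold e2
    rw [hu, hv, Real.log_div habar0.ne' hT.ne', Real.log_div hbbar0.ne' hT.ne']
    ring
  have h1 : q * a1 * u + q' * b1 * v ≤ e2 q q' a1 b1 :=
    e2_dual hq hq' ha1 hb1 (T_pos hq hq' hqq ha1 hb1) hsum
  have h2 : q * a2 * u + q' * b2 * v ≤ e2 q q' a2 b2 :=
    e2_dual hq hq' ha2 hb2 (T_pos hq hq' hqq ha2 hb2) hsum
  rw [heq, habar, hbbar]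
  nlinarith [mul_le_mul_of_nonneg_left h1 hr, mul_le_mul_of_nonneg_left h2 hr']

/-- Upper bound on `e2` via an arbitrary positive reference value `v`. -/
lemma e2_le_ref {q q' a b v : ℝ} (hq : 0 ≤ q) (hq' : 0 ≤ q') (hqq : q + q' = 1)
    (ha : 0 < a) (hb : 0 < b) (hv : 0 < v) :
    e2 q q' a b ≤ q * (a * Real.log a - a * Real.log v - a + v)
      + q' * (b * Real.log b - b * Real.log v - b + v) := by
  have hT : 0 < q * a + q' * b := T_pos hq hq' hqq ha hb
  set T := q * a + q' * b with hTdef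
  have key : T * Real.log v - T * Real.log T ≤ v - T := by
    have h1 : Real.log (v / T) ≤ v / T - 1 := Real.log_le_sub_one_of_pos (by positivity)
    have h2 : Real.log (v / T) = Real.log v - Real.log T := Real.log_div hv.ne' hT.ne'
    rw [h2] at h1
    have h3 := mul_le_mul_of_nonneg_left h1 hT.le
    have h4 : T * (v / T - 1) = v - T := by field_simp
    nlinarith
  have expand : q * (a * Real.log a - a * Real.log v - a + v)
      + q' * (b * Real.log b - b * Real.log v - b + v)
      = q * (a * Real.log a) + q' * (b * Real.log b) - T * Real.log v - T + v := by
    linear_combination v * hqq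
  rw [expand]
  unfold e2
  rw [← hTdef]
  linarith
noncomputable section Main
variable {n : ℕ}

/-- Conditional (one-coordinate) entropy. -/
noncomputable def entc (bw : Fin n → Bool → ℝ) (i : Fin n) (h : (Fin n → Bool) → ℝ) :
    (Fin n → Bool) → ℝ :=
  fun x => e2 (bw i true) (bw i false) (h (update x i true)) (h (update x i false))

/-- Global entropy. -/
noncomputable def EntW (bw : Fin n → Bool → ℝ) (h : (Fin n → Bool) → ℝ) : ℝ :=
  Ew bw (fun x => h x * Real.log (h x)) - Ew bw h * Real.log (Ew bw h)

lemma entc_eq (bw : Fin n → Bool → ℝ) (i : Fin n) (h : (Fin n → Bool) → ℝ) (x : Fin n → Bool) :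
    entc bw i h x = Ti bw i (fun y => h y * Real.log (h y)) x
      - Ti bw i h x * Real.log (Ti bw i h x) := by
  simp only [entc, e2, Ti]

lemma Ew_mono {bw : Fin n → Bool → ℝ} (hbw0 : ∀ i b, 0 ≤ bw i b)
    {h h' : (Fin n → Bool) → ℝ} (hh : ∀ x, h x ≤ h' x) : Ew bw h ≤ Ew bw h' := by
  apply Finset.sum_le_sum
  intro x _
  exact mul_le_mul_of_nonneg_left (hh x) (wP_nonneg hbw0 x)

lemma Ti_mono {bw : Fin n → Bool → ℝ} (hbw0 : ∀ i b, 0 ≤ bw i b) (i : Fin n)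
    {h h' : (Fin n → Bool) → ℝ} (hh : ∀ x, h x ≤ h' x) (x : Fin n → Bool) :
    Ti bw i h x ≤ Ti bw i h' x :=
  add_le_add (mul_le_mul_of_nonneg_left (hh _) (hbw0 i true))
    (mul_le_mul_of_nonneg_left (hh _) (hbw0 i false))

lemma Ti_pos {bw : Fin n → Bool → ℝ} (hbw0 : ∀ i b, 0 ≤ bw i b)
    (hbw1 : ∀ i, bw i true + bw i false = 1) (i : Fin n)
    {h : (Fin n → Bool) → ℝ} (hh : ∀ x, 0 < h x) (x : Fin n → Bool) :
    0 < Ti bw i h x := by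
  unfold Ti
  rcases eq_or_lt_of_le (hbw0 i true) with hq | hq
  · have : bw i false = 1 := by have := hbw1 i; linarith
    rw [← hq, this]; simp; exact hh _
  · have h2 : 0 ≤ bw i false * h (update x i false) :=
      mul_nonneg (hbw0 i false) (hh _).le
    nlinarith [hh (update x i true)]

/-- Telescoping identity. -/
lemma EntW_step {bw : Fin n → Bool → ℝ} (hbw1 : ∀ i, bw i true + bw i false = 1)
    (i : Fin n) (h : (Fin n → Bool) → ℝ) :
    EntW bw h = Ew bw (entc bw i h) + EntW bw (Ti bw i h) := by
  unfold EntW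
  have e1 : Ew bw (entc bw i h) = Ew bw (Ti bw i (fun y => h y * Real.log (h y)))
      - Ew bw (fun x => Ti bw i h x * Real.log (Ti bw i h x)) := by
    unfold Ew
    rw [← Finset.sum_sub_distrib]
    apply Finset.sum_congr rfl
    intro x _
    rw [entc_eq]
    ring
  rw [e1, Ew_Ti hbw1 i (fun y => h y * Real.log (h y)), Ew_Ti hbw1 i h]
  ring


lemma entc_Ti_le {bw : Fin n → Bool → ℝ} (hbw0 : ∀ i b, 0 ≤ bw i b)
    (hbw1 : ∀ i, bw i true + bw i false = 1) (i j : Fin n)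
    {h : (Fin n → Bool) → ℝ} (hh : ∀ x, 0 < h x) (x : Fin n → Bool) :
    entc bw i (Ti bw j h) x ≤ Ti bw j (entc bw i h) x := by
  rcases eq_or_ne i j with rfl | hij
  · have harg : ∀ b, Ti bw i h (update x i b) = Ti bw i h x := by
      intro b
      unfold Ti
      rw [update_idem, update_idem]
    have hzero : entc bw i (Ti bw i h) x = 0 := by
      unfold entc
      rw [harg true, harg false]
      exact e2_self (hbw1 i)
    rw [hzero]
    unfold Ti
    have h1 : ∀ y, 0 ≤ entc bw i h y := by
      intro y
      exact e2_nonneg (hbw0 i true) (hbw0 i false) (hbw1 i) (hh _) (hh _)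
    have := h1 (update x i true)
    have := h1 (update x i false)
    nlinarith [hbw0 i true, hbw0 i false, h1 (update x i true), h1 (update x i false),
      mul_nonneg (hbw0 i true) (h1 (update x i true)),
      mul_nonneg (hbw0 i false) (h1 (update x i false))]
  · have harg : ∀ b c, update (update x i b) j c = update (update x j c) i b := by
      intro b c
      exact Function.update_comm hij b c x
    unfold entc Ti
    rw [harg true true, harg true false, harg false true, harg false false]
    exact e2_convex2 (hbw0 i true) (hbw0 i false) (hbw1 i) (hbw0 j true) (hbw0 j false)
      (hbw1 j) (hh _) (hh _) (hh _) (hh _)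

def Pl (bw : Fin n → Bool → ℝ) : List (Fin n) → ((Fin n → Bool) → ℝ) → ((Fin n → Bool) → ℝ)
  | [], h => h
  | (i :: l), h => Pl bw l (Ti bw i h)

lemma Pl_pos {bw : Fin n → Bool → ℝ} (hbw0 : ∀ i b, 0 ≤ bw i b)
    (hbw1 : ∀ i, bw i true + bw i false = 1) :
    ∀ (l : List (Fin n)) (h : (Fin n → Bool) → ℝ), (∀ x, 0 < h x) →
      ∀ x, 0 < Pl bw l h x := by
  intro l
  induction l with
  | nil => intro h hh x; exact hh x
  | cons i l ih =>
    intro h hh x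
    exact ih (Ti bw i h) (fun y => Ti_pos hbw0 hbw1 i hh y) x

lemma Pl_mono {bw : Fin n → Bool → ℝ} (hbw0 : ∀ i b, 0 ≤ bw i b) :
    ∀ (l : List (Fin n)) (h h' : (Fin n → Bool) → ℝ), (∀ x, h x ≤ h' x) →
      ∀ x, Pl bw l h x ≤ Pl bw l h' x := by
  intro l
  induction l with
  | nil => intro h h' hh x; exact hh x
  | cons i l ih =>
    intro h h' hh x
    exact ih (Ti bw i h) (Ti bw i h') (fun y => Ti_mono hbw0 i hh y) x

lemma Ew_Pl {bw : Fin n → Bool → ℝ} (hbw1 : ∀ i, bw i true + bw i false = 1) :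
    ∀ (l : List (Fin n)) (h : (Fin n → Bool) → ℝ), Ew bw (Pl bw l h) = Ew bw h := by
  intro l
  induction l with
  | nil => intro h; rfl
  | cons i l ih =>
    intro h
    have : Pl bw (i :: l) h = Pl bw l (Ti bw i h) := rfl
    rw [this, ih (Ti bw i h), Ew_Ti hbw1 i h]

lemma entc_Pl_le {bw : Fin n → Bool → ℝ} (hbw0 : ∀ i b, 0 ≤ bw i b)
    (hbw1 : ∀ i, bw i true + bw i false = 1) (i : Fin n) :
    ∀ (l : List (Fin n)) (h : (Fin n → Bool) → ℝ), (∀ x, 0 < h x) →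
      ∀ x, entc bw i (Pl bw l h) x ≤ Pl bw l (entc bw i h) x := by
  intro l
  induction l with
  | nil => intro h hh x; exact le_refl _
  | cons j l ih =>
    intro h hh x
    have step1 : entc bw i (Pl bw l (Ti bw j h)) x ≤ Pl bw l (entc bw i (Ti bw j h)) x :=
      ih (Ti bw j h) (fun y => Ti_pos hbw0 hbw1 j hh y) x
    have step2 : Pl bw l (entc bw i (Ti bw j h)) x ≤ Pl bw l (Ti bw j (entc bw i h)) x :=
      Pl_mono hbw0 l _ _ (fun y => entc_Ti_le hbw0 hbw1 i j hh y) x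
    exact le_trans step1 step2

lemma EntW_le_sum {bw : Fin n → Bool → ℝ} (hbw0 : ∀ i b, 0 ≤ bw i b)
    (hbw1 : ∀ i, bw i true + bw i false = 1) :
    ∀ (l : List (Fin n)) (h : (Fin n → Bool) → ℝ), (∀ x, 0 < h x) →
      EntW bw h ≤ (l.map (fun i => Ew bw (entc bw i h))).sum + EntW bw (Pl bw l h) := by
  intro l
  induction l with
  | nil => intro h hh; simp [Pl]
  | cons i l ih =>
    intro h hh
    rw [EntW_step hbw1 i h]
    have hTi : ∀ x, 0 < Ti bw i h x := fun x => Ti_pos hbw0 hbw1 i hh x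
    have h1 := ih (Ti bw i h) hTi
    have h2 : (l.map (fun j => Ew bw (entc bw j (Ti bw i h)))).sum
        ≤ (l.map (fun j => Ew bw (entc bw j h))).sum := by
      apply List.sum_le_sum
      intro j hj
      calc Ew bw (entc bw j (Ti bw i h))
          ≤ Ew bw (Ti bw i (entc bw j h)) :=
            Ew_mono hbw0 (fun x => entc_Ti_le hbw0 hbw1 j i hh x)
        _ = Ew bw (entc bw j h) := Ew_Ti hbw1 i _
    have : Pl bw (i :: l) h = Pl bw l (Ti bw i h) := rfl
    rw [this, List.map_cons, List.sum_cons]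
    linarith

def Inv (i : Fin n) (h : (Fin n → Bool) → ℝ) : Prop :=
  ∀ x b, h (update x i b) = h x

lemma Inv_Ti {bw : Fin n → Bool → ℝ} (i j : Fin n) (h : (Fin n → Bool) → ℝ)
    (hinv : i = j ∨ Inv i h) : Inv i (Ti bw j h) := by
  rcases hinv with rfl | hinv
  · intro x b
    unfold Ti
    rw [update_idem, update_idem]
  · rcases eq_or_ne i j with rfl | hij
    · intro x b
      unfold Ti
      rw [update_idem, update_idem]
    · intro x b
      unfold Ti
      rw [Function.update_comm hij, Function.update_comm hij]
      rw [hinv (update x j true) b, hinv (update x j false) b]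

lemma Inv_Pl {bw : Fin n → Bool → ℝ} (i : Fin n) :
    ∀ (l : List (Fin n)) (h : (Fin n → Bool) → ℝ), (i ∈ l ∨ Inv i h) →
      Inv i (Pl bw l h) := by
  intro l
  induction l with
  | nil =>
    intro h hh
    rcases hh with hh | hh
    · exact absurd hh List.not_mem_nil
    · exact hh
  | cons j l ih =>
    intro h hh
    show Inv i (Pl bw l (Ti bw j h))
    rcases hh with hh | hh
    · rcases List.mem_cons.mp hh with rfl | hil
      · exact ih (Ti bw i h) (Or.inr (Inv_Ti i i h (Or.inl rfl)))
      · exact ih (Ti bw j h) (Or.inl hil)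
    · exact ih (Ti bw j h) (Or.inr (Inv_Ti i j h (Or.inr hh)))

lemma const_of_inv {K : (Fin n → Bool) → ℝ} (hK : ∀ i, Inv i K) (x y : Fin n → Bool) :
    K x = K y := by
  have aux : ∀ s : Finset (Fin n), ∀ x y : Fin n → Bool,
      (∀ j, j ∉ s → x j = y j) → K x = K y := by
    intro s
    induction s using Finset.induction with
    | empty =>
      intro x y hxy
      have : x = y := funext fun j => hxy j (Finset.notMem_empty j)
      rw [this]
    | @insert i s his ih =>
      intro x y hxy
      have h1 : K y = K (update y i (x i)) := (hK i y (x i)).symm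
      rw [h1]
      apply ih
      intro j hj
      rcases eq_or_ne j i with rfl | hji
      · rw [update_self]
      · rw [update_of_ne hji]
        exact hxy j (by simp [hji, hj])
  exact aux univ x y (fun j hj => absurd (mem_univ j) (by exact fun _ => hj (mem_univ j)))

lemma Ew_const {bw : Fin n → Bool → ℝ} (hbw1 : ∀ i, bw i true + bw i false = 1) (k : ℝ) :
    Ew bw (fun _ => k) = k := by
  unfold Ew
  rw [← Finset.sum_mul, sum_wP hbw1, one_mul]

lemma EntW_const {bw : Fin n → Bool → ℝ} (hbw1 : ∀ i, bw i true + bw i false = 1) (k : ℝ) :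
    EntW bw (fun _ => k) = 0 := by
  unfold EntW
  rw [Ew_const hbw1, Ew_const hbw1 k]
  ring

/-- Subadditivity of entropy over coordinates. -/
lemma EntW_le_total {bw : Fin n → Bool → ℝ} (hbw0 : ∀ i b, 0 ≤ bw i b)
    (hbw1 : ∀ i, bw i true + bw i false = 1)
    (h : (Fin n → Bool) → ℝ) (hh : ∀ x, 0 < h x) :
    EntW bw h ≤ ∑ i : Fin n, Ew bw (entc bw i h) := by
  have key := EntW_le_sum hbw0 hbw1 (List.finRange n) h hh
  set K := Pl bw (List.finRange n) h with hKdef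
  have hKinv : ∀ i, Inv i K := fun i =>
    Inv_Pl i (List.finRange n) h (Or.inl (List.mem_finRange i))
  have hKconst : K = fun _ => K (fun _ => true) := by
    funext x
    exact const_of_inv hKinv x (fun _ => true)
  have hEntK : EntW bw K = 0 := by
    rw [hKconst]
    exact EntW_const hbw1 _
  rw [hEntK, add_zero] at key
  have : ((List.finRange n).map (fun i => Ew bw (entc bw i h))).sum
      = ∑ i : Fin n, Ew bw (entc bw i h) := by
    rw [Fin.sum_univ_def]
  linarith


lemma phim_nonneg (t : ℝ) : 0 ≤ Real.exp (-t) + t - 1 := by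
  have := Real.add_one_le_exp (-t)
  linarith

lemma phim_scale {t d : ℝ} (ht : 0 ≤ t) (hd0 : 0 ≤ d) (hd1 : d ≤ 1) :
    Real.exp (-(t * d)) + t * d - 1 ≤ d * (Real.exp (-t) + t - 1) := by
  have hconv := convexOn_exp.2 (Set.mem_univ (0 : ℝ)) (Set.mem_univ (-t))
    (by linarith : (0:ℝ) ≤ 1 - d) hd0 (by ring)
  simp only [smul_eq_mul, mul_zero, zero_add, Real.exp_zero, mul_one] at hconv
  rw [show -(t * d) = d * (-t) by ring]
  linarith

lemma Ew_smul {bw : Fin n → Bool → ℝ} (c : ℝ) (k : (Fin n → Bool) → ℝ) :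
    Ew bw (fun x => c * k x) = c * Ew bw k := by
  unfold Ew
  rw [Finset.mul_sum]
  apply Finset.sum_congr rfl
  intro x _
  ring

lemma Ew_congr {bw : Fin n → Bool → ℝ} {k k' : (Fin n → Bool) → ℝ}
    (h : ∀ x, k x = k' x) : Ew bw k = Ew bw k' := by
  unfold Ew
  exact Finset.sum_congr rfl (fun x _ => by rw [h x])

lemma Ew_sum {bw : Fin n → Bool → ℝ} (F : Fin n → (Fin n → Bool) → ℝ) :
    ∑ i : Fin n, Ew bw (F i) = Ew bw (fun x => ∑ i : Fin n, F i x) := by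
  unfold Ew
  rw [Finset.sum_comm]
  apply Finset.sum_congr rfl
  intro x _
  rw [Finset.mul_sum]

lemma entc_le_phi {bw : Fin n → Bool → ℝ} (hbw0 : ∀ i b, 0 ≤ bw i b)
    (hbw1 : ∀ i, bw i true + bw i false = 1) (g : (Fin n → Bool) → ℝ)
    {t : ℝ} (i : Fin n) (x : Fin n → Bool) :
    entc bw i (fun y => Real.exp (t * g y)) x
      ≤ Ti bw i (fun y => Real.exp (t * g y)
          * (Real.exp (-(t * Dg g i y)) + t * Dg g i y - 1)) x := by
  set mi := min (g (update x i true)) (g (update x i false)) with hmi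
  have key : ∀ b : Bool, Real.exp (t * g (update x i b))
      * (Real.exp (-(t * Dg g i (update x i b))) + t * Dg g i (update x i b) - 1)
      = Real.exp (t * g (update x i b)) * Real.log (Real.exp (t * g (update x i b)))
        - Real.exp (t * g (update x i b)) * Real.log (Real.exp (t * mi))
        - Real.exp (t * g (update x i b)) + Real.exp (t * mi) := by
    intro b
    have hD : Dg g i (update x i b) = g (update x i b) - mi := by
      rw [Dg_update_self, hmi]
    have hprod : Real.exp (t * g (update x i b)) * Real.exp (-(t * Dg g i (update x i b)))
        = Real.exp (t * mi) := by
      rw [← Real.exp_add, hD]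
      congr 1
      ring
    rw [Real.log_exp, Real.log_exp]
    linear_combination hprod + (Real.exp (t * g (update x i b)) * t) * hD
  have hres := e2_le_ref (hbw0 i true) (hbw0 i false) (hbw1 i)
    (Real.exp_pos (t * g (update x i true))) (Real.exp_pos (t * g (update x i false)))
    (Real.exp_pos (t * mi))
  unfold entc
  unfold Ti
  calc e2 (bw i true) (bw i false) (Real.exp (t * g (update x i true)))
        (Real.exp (t * g (update x i false))) ≤ _ := hres
    _ = _ := by
        show _ = bw i true * (Real.exp (t * g (update x i true))
            * (Real.exp (-(t * Dg g i (update x i true)))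
              + t * Dg g i (update x i true) - 1))
          + bw i false * (Real.exp (t * g (update x i false))
            * (Real.exp (-(t * Dg g i (update x i false)))
              + t * Dg g i (update x i false) - 1))
        rw [key true, key false]

/-- Master modified-LSI inequality for self-bounding functions. -/
lemma master {bw : Fin n → Bool → ℝ} (hbw0 : ∀ i b, 0 ≤ bw i b)
    (hbw1 : ∀ i, bw i true + bw i false = 1) {g : (Fin n → Bool) → ℝ}
    (hg0 : ∀ x, 0 ≤ g x) (hD1 : ∀ i x, Dg g i x ≤ 1)
    (hDsum : ∀ x, ∑ i : Fin n, Dg g i x ≤ 2 * g x) {t : ℝ} (ht : 0 < t) :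
    t * Ew bw (fun x => g x * Real.exp (t * g x))
      - Ew bw (fun x => Real.exp (t * g x))
          * Real.log (Ew bw (fun x => Real.exp (t * g x)))
      ≤ 2 * (Real.exp (-t) + t - 1) * Ew bw (fun x => g x * Real.exp (t * g x)) := by
  set h : (Fin n → Bool) → ℝ := fun x => Real.exp (t * g x) with hhdef
  have hpos : ∀ x, 0 < h x := fun x => Real.exp_pos _
  have e0 : Ew bw (fun x => h x * Real.log (h x)) = t * Ew bw (fun x => g x * h x) := by
    rw [← Ew_smul]
    apply Ew_congr
    intro x
    show Real.exp (t * g x) * Real.log (Real.exp (t * g x)) = t * (g x * Real.exp (t * g x))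
    rw [Real.log_exp]
    ring
  have step1 : EntW bw h ≤ ∑ i : Fin n, Ew bw (entc bw i h) := EntW_le_total hbw0 hbw1 h hpos
  have step2 : ∑ i : Fin n, Ew bw (entc bw i h)
      ≤ ∑ i : Fin n, Ew bw (fun y => h y * (Real.exp (-(t * Dg g i y)) + t * Dg g i y - 1)) := by
    apply Finset.sum_le_sum
    intro i _
    calc Ew bw (entc bw i h) ≤ Ew bw (Ti bw i (fun y => h y
          * (Real.exp (-(t * Dg g i y)) + t * Dg g i y - 1))) :=
        Ew_mono hbw0 (fun x => entc_le_phi hbw0 hbw1 g i x)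
      _ = _ := Ew_Ti hbw1 i _
  have step3 : ∑ i : Fin n, Ew bw (fun y => h y * (Real.exp (-(t * Dg g i y)) + t * Dg g i y - 1))
      ≤ 2 * (Real.exp (-t) + t - 1) * Ew bw (fun x => g x * h x) := by
    rw [Ew_sum]
    rw [← Ew_smul]
    apply Ew_mono hbw0
    intro x
    show ∑ i : Fin n, Real.exp (t * g x) * (Real.exp (-(t * Dg g i x)) + t * Dg g i x - 1)
      ≤ 2 * (Real.exp (-t) + t - 1) * (g x * Real.exp (t * g x))
    have pt : ∀ i, Real.exp (-(t * Dg g i x)) + t * Dg g i x - 1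
        ≤ Dg g i x * (Real.exp (-t) + t - 1) := by
      intro i
      exact phim_scale ht.le (Dg_nonneg g i x) (hD1 i x)
    calc ∑ i : Fin n, Real.exp (t * g x) * (Real.exp (-(t * Dg g i x)) + t * Dg g i x - 1)
        = Real.exp (t * g x) * ∑ i : Fin n, (Real.exp (-(t * Dg g i x)) + t * Dg g i x - 1) := by
          rw [Finset.mul_sum]
      _ ≤ Real.exp (t * g x) * ((Real.exp (-t) + t - 1) * (2 * g x)) := by
          apply mul_le_mul_of_nonneg_left _ (Real.exp_pos (t * g x)).le
          calc ∑ i : Fin n, (Real.exp (-(t * Dg g i x)) + t * Dg g i x - 1)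
              ≤ ∑ i : Fin n, Dg g i x * (Real.exp (-t) + t - 1) :=
                Finset.sum_le_sum (fun i _ => pt i)
            _ = (∑ i : Fin n, Dg g i x) * (Real.exp (-t) + t - 1) := by
                rw [Finset.sum_mul]
            _ ≤ (2 * g x) * (Real.exp (-t) + t - 1) :=
                mul_le_mul_of_nonneg_right (hDsum x) (phim_nonneg t)
            _ = (Real.exp (-t) + t - 1) * (2 * g x) := by ring
      _ = 2 * (Real.exp (-t) + t - 1) * (g x * Real.exp (t * g x)) := by ring
  have := le_trans step1 (le_trans step2 step3)
  unfold EntW at this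
  rw [e0] at this
  exact this


lemma nonneg_of_deriv (F F' : ℝ → ℝ) (hF : ∀ x, HasDerivAt F (F' x) x) (hF0 : F 0 = 0)
    (hF' : ∀ x, 0 ≤ x → 0 ≤ F' x) : ∀ t, 0 ≤ t → 0 ≤ F t := by
  intro t ht
  have mono : MonotoneOn F (Set.Ici 0) := by
    apply monotoneOn_of_deriv_nonneg (convex_Ici 0)
    · exact fun x _ => (hF x).continuousAt.continuousWithinAt
    · exact fun x hx => (hF x).differentiableAt.differentiableWithinAt
    · intro x hx
      rw [(hF x).deriv]
      rw [interior_Ici] at hx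
      exact hF' x (le_of_lt hx)
  have := mono (Set.self_mem_Ici) (Set.mem_Ici.mpr ht) ht
  rwa [hF0] at this

lemma hasDerivAt_expneg (t : ℝ) : HasDerivAt (fun s => Real.exp (-s)) (-Real.exp (-t)) t := by
  have h1 := (Real.hasDerivAt_exp (-t)).comp t (hasDerivAt_neg t)
  rw [mul_neg_one] at h1
  exact h1

lemma exp_neg_le_quadratic : ∀ t : ℝ, 0 ≤ t → Real.exp (-t) ≤ 1 - t + t^2/2 := by
  have key := nonneg_of_deriv (fun t => 1 - t + t^2/2 - Real.exp (-t))
    (fun t => -1 + t + Real.exp (-t))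
    (fun x => by
      have hp : HasDerivAt (fun t : ℝ => 1 - t + t^2/2) (-1 + x) x := by
        have h1 : HasDerivAt (fun t : ℝ => t^2) (2*x) x := by
          simpa using hasDerivAt_pow 2 x
        have h2 := ((hasDerivAt_const x (1:ℝ)).fun_sub (hasDerivAt_id x)).fun_add (h1.div_const 2)
        exact h2.congr_deriv (by ring)
      have := hp.fun_sub (hasDerivAt_expneg x)
      exact this.congr_deriv (by ring))
    (by norm_num)
    (fun x hx => by
      show (0:ℝ) ≤ -1 + x + Real.exp (-x)
      have := Real.add_one_le_exp (-x)
      linarith)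
  intro t ht
  have h := key t ht
  linarith

lemma cubic_le_exp_neg : ∀ t : ℝ, 0 ≤ t → 1 - t + t^2/2 - t^3/6 ≤ Real.exp (-t) := by
  have key := nonneg_of_deriv (fun t => Real.exp (-t) - (1 - t + t^2/2 - t^3/6))
    (fun t => -Real.exp (-t) + 1 - t + t^2/2)
    (fun x => by
      have h1 : HasDerivAt (fun t : ℝ => t^2) (2*x) x := by simpa using hasDerivAt_pow 2 x
      have h2 : HasDerivAt (fun t : ℝ => t^3) (3*x^2) x := by simpa using hasDerivAt_pow 3 x
      have hp : HasDerivAt (fun t : ℝ => 1 - t + t^2/2 - t^3/6) (-1 + x - x^2/2) x := by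
        have := (((hasDerivAt_const x (1:ℝ)).fun_sub (hasDerivAt_id x)).fun_add
          (h1.div_const 2)).fun_sub (h2.div_const 6)
        exact this.congr_deriv (by ring)
      have := (hasDerivAt_expneg x).fun_sub hp
      exact this.congr_deriv (by ring))
    (by norm_num)
    (fun x hx => by
      show (0:ℝ) ≤ -Real.exp (-x) + 1 - x + x^2/2
      have := exp_neg_le_quadratic x hx
      linarith)
  intro t ht
  have h := key t ht
  linarith

lemma exp_neg_le_quartic : ∀ t : ℝ, 0 ≤ t →
    Real.exp (-t) ≤ 1 - t + t^2/2 - t^3/6 + t^4/24 := by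
  have key := nonneg_of_deriv (fun t => 1 - t + t^2/2 - t^3/6 + t^4/24 - Real.exp (-t))
    (fun t => -1 + t - t^2/2 + t^3/6 + Real.exp (-t))
    (fun x => by
      have h1 : HasDerivAt (fun t : ℝ => t^2) (2*x) x := by simpa using hasDerivAt_pow 2 x
      have h2 : HasDerivAt (fun t : ℝ => t^3) (3*x^2) x := by simpa using hasDerivAt_pow 3 x
      have h3 : HasDerivAt (fun t : ℝ => t^4) (4*x^3) x := by simpa using hasDerivAt_pow 4 x
      have hp : HasDerivAt (fun t : ℝ => 1 - t + t^2/2 - t^3/6 + t^4/24)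
          (-1 + x - x^2/2 + x^3/6) x := by
        have := ((((hasDerivAt_const x (1:ℝ)).fun_sub (hasDerivAt_id x)).fun_add
          (h1.div_const 2)).fun_sub (h2.div_const 6)).fun_add (h3.div_const 24)
        exact this.congr_deriv (by ring)
      have := hp.fun_sub (hasDerivAt_expneg x)
      exact this.congr_deriv (by ring))
    (by norm_num)
    (fun x hx => by
      show (0:ℝ) ≤ -1 + x - x^2/2 + x^3/6 + Real.exp (-x)
      have := cubic_le_exp_neg x hx
      linarith)
  intro t ht
  have h := key t ht
  linarith

lemma u_pos {t : ℝ} (ht : 0 < t) (ht' : t < 6/5) : 0 < 2 - t - 2 * Real.exp (-t) := by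
  have hq := exp_neg_le_quartic t ht.le
  nlinarith [sq_nonneg t, sq_nonneg (t - 6/5), sq_nonneg (t*(t-6/5)), pow_pos ht 3, pow_pos ht 4]


lemma psid_nonneg {m t : ℝ} (hm : 0 ≤ m) (ht : 0 < t) (ht' : t < 6/5) :
    0 ≤ m + m * (2*t - 5/6*t^2) / (1 - 5/6*t)^2 := by
  have hd : 0 < (1 - 5/6*t)^2 := by nlinarith
  have h1 : 0 ≤ 2*t - 5/6*t^2 := by nlinarith
  positivity

lemma psi_le_u_mul_psid {m t : ℝ} (hm : 0 ≤ m) (ht : 0 < t) (ht' : t < 6/5) :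
    m*t + m*t^2/(1 - 5/6*t) ≤ (2 - t - 2*Real.exp (-t))
      * (m + m * (2*t - 5/6*t^2) / (1 - 5/6*t)^2) := by
  have hq := exp_neg_le_quartic t ht.le
  have hd : 0 < 1 - 5/6*t := by nlinarith
  have hpsid := psid_nonneg hm ht ht'
  have hu : t - t^2 + t^3/3 - t^4/12 ≤ 2 - t - 2*Real.exp (-t) := by nlinarith
  have key : m*t + m*t^2/(1 - 5/6*t) ≤ (t - t^2 + t^3/3 - t^4/12)
      * (m + m * (2*t - 5/6*t^2) / (1 - 5/6*t)^2) := by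
    set d : ℝ := 1 - 5/6*t with hddef
    have hd2 : 0 < d^2 := by positivity
    have e1 : m*t + m*t^2/d = (m*t*d^2 + m*t^2*d)/d^2 := by
      field_simp
    have e2 : (t - t^2 + t^3/3 - t^4/12) * (m + m * (2*t - 5/6*t^2) / d^2)
        = ((t - t^2 + t^3/3 - t^4/12) * (m*d^2 + m*(2*t - 5/6*t^2)))/d^2 := by
      field_simp
    rw [e1, e2, div_le_div_iff_of_pos_right hd2]
    have hnum : 0 ≤ 72 - 32*t + 5*t^2 := by nlinarith [sq_nonneg (t - 16/5)]
    have hint : 0 ≤ m * (t^4 * (72 - 32*t + 5*t^2)) :=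
      mul_nonneg hm (mul_nonneg (by positivity) hnum)
    rw [hddef]
    nlinarith [hint]
  calc m*t + m*t^2/(1 - 5/6*t) ≤ _ := key
    _ ≤ _ := mul_le_mul_of_nonneg_right hu hpsid



open Filter Set in
lemma mgf_bound {bw : Fin n → Bool → ℝ} (hbw0 : ∀ i b, 0 ≤ bw i b)
    (hbw1 : ∀ i, bw i true + bw i false = 1) {g : (Fin n → Bool) → ℝ}
    (hg0 : ∀ x, 0 ≤ g x) (hD1 : ∀ i x, Dg g i x ≤ 1)
    (hDsum : ∀ x, ∑ i : Fin n, Dg g i x ≤ 2 * g x) {t : ℝ} (ht : 0 < t) (ht' : t < 6/5) :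
    Real.log (Ew bw (fun x => Real.exp (t * g x)))
      ≤ (Ew bw g) * t + (Ew bw g) * t^2 / (1 - 5/6*t) := by
  classical
  set m := Ew bw g with hmdef
  have hm0 : 0 ≤ m := by
    rw [hmdef]
    calc (0:ℝ) = Ew bw (fun _ => 0) := by
          unfold Ew; simp
      _ ≤ Ew bw g := Ew_mono hbw0 (fun x => hg0 x)
  -- the functions
  set FF : ℝ → ℝ := fun s => Ew bw (fun x => Real.exp (s * g x)) with hFFdef
  set Fd : ℝ → ℝ := fun s => Ew bw (fun x => g x * Real.exp (s * g x)) with hFddef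
  have hFF : ∀ s, HasDerivAt FF (Fd s) s := by
    intro s
    have term : ∀ x : Fin n → Bool, HasDerivAt
        (fun s' : ℝ => wP bw x * Real.exp (s' * g x))
        (wP bw x * (g x * Real.exp (s * g x))) s := by
      intro x
      have h1 : HasDerivAt (fun s' : ℝ => s' * g x) (g x) s := hasDerivAt_mul_const (g x)
      have h2 := h1.exp
      have h3 := h2.const_mul (wP bw x)
      exact h3.congr_deriv (by ring)
    have hsum := HasDerivAt.fun_sum (fun x (_ : x ∈ Finset.univ) => term x)
    have e1 : FF = fun s' => ∑ x : Fin n → Bool, wP bw x * Real.exp (s' * g x) := rfl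
    have e2 : Fd s = ∑ x : Fin n → Bool, wP bw x * (g x * Real.exp (s * g x)) := rfl
    rw [e1, e2]
    exact hsum
  have hFFpos : ∀ s, 0 < FF s := by
    intro s
    have hex : ∃ x : Fin n → Bool, wP bw x ≠ 0 := by
      by_contra hc
      push_neg at hc
      have : ∑ x : Fin n → Bool, wP bw x = 0 := Finset.sum_eq_zero (fun x _ => hc x)
      rw [sum_wP hbw1] at this
      norm_num at this
    obtain ⟨x0, hx0⟩ := hex
    apply Finset.sum_pos'
    · intro x _
      exact mul_nonneg (wP_nonneg hbw0 x) (Real.exp_pos _).le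
    · exact ⟨x0, Finset.mem_univ x0, mul_pos (lt_of_le_of_ne (wP_nonneg hbw0 x0)
        (Ne.symm hx0)) (Real.exp_pos _)⟩
  have hFF0 : FF 0 = 1 := by
    have : FF 0 = Ew bw (fun _ => 1) := by
      apply Finset.sum_congr rfl
      intro x _
      simp
    rw [this, Ew_const hbw1]
  have hFd0 : Fd 0 = m := by
    have : Fd 0 = Ew bw g := by
      apply Finset.sum_congr rfl
      intro x _
      simp
    rw [this, hmdef]
  have hFdnn : ∀ s, 0 ≤ s → 0 ≤ Fd s := by
    intro s _
    apply Finset.sum_nonneg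
    intro x _
    exact mul_nonneg (wP_nonneg hbw0 x) (mul_nonneg (hg0 x) (Real.exp_pos _).le)
  set G : ℝ → ℝ := fun s => Real.log (FF s) with hGdef
  have hG : ∀ s, HasDerivAt G (Fd s / FF s) s := fun s => (hFF s).log (hFFpos s).ne'
  have hG0 : G 0 = 0 := by rw [hGdef]; simp only; rw [hFF0, Real.log_one]
  have hGnn : ∀ s, 0 ≤ s → 0 ≤ G s := by
    intro s hs
    apply Real.log_nonneg
    rw [hFFdef]
    calc (1:ℝ) = Ew bw (fun _ => 1) := (Ew_const hbw1 1).symm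
      _ ≤ _ := Ew_mono hbw0 (fun x => by
          rw [← Real.exp_zero]
          exact Real.exp_le_exp.mpr (mul_nonneg hs (hg0 x)))
  have hmaster : ∀ s, 0 < s → (2 - s - 2*Real.exp (-s)) * (Fd s / FF s) ≤ G s := by
    intro s hs
    have hM : s * Fd s - FF s * Real.log (FF s)
        ≤ 2 * (Real.exp (-s) + s - 1) * Fd s :=
      master hbw0 hbw1 hg0 hD1 hDsum hs
    have hFp := hFFpos s
    have hgoal : (2 - s - 2*Real.exp (-s)) * Fd s ≤ FF s * Real.log (FF s) := by
      nlinarith [hM]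
    rw [← mul_div_assoc, div_le_iff₀ hFp]
    have hGs : G s = Real.log (FF s) := rfl
    rw [hGs]
    nlinarith [hgoal]
  -- m = 0 case
  rcases eq_or_lt_of_le hm0 with hm | hm
  · -- m = 0 : every wP x * g x = 0
    have hall : ∀ x ∈ Finset.univ, wP bw x * g x = 0 := by
      rw [← Finset.sum_eq_zero_iff_of_nonneg
        (fun x _ => mul_nonneg (wP_nonneg hbw0 x) (hg0 x))]
      exact hm.symm ▸ rfl
    have hFFt : FF t = 1 := by
      have : FF t = Ew bw (fun _ => 1) := by
        apply Finset.sum_congr rfl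
        intro x _
        rcases eq_or_ne (wP bw x) 0 with hw | hw
        · rw [hw, zero_mul, zero_mul]
        · have hgx : g x = 0 := by
            have := hall x (Finset.mem_univ x)
            rcases mul_eq_zero.mp this with h | h
            · exact absurd h hw
            · exact h
          show wP bw x * Real.exp (t * g x) = wP bw x * 1
          rw [hgx, mul_zero, Real.exp_zero]
      rw [this, Ew_const hbw1]
    show Real.log (FF t) ≤ m * t + m * t^2 / (1 - 5/6*t)
    rw [hFFt, Real.log_one, ← hm]
    simp
  -- m > 0 : Herbst argument
  · set ψ : ℝ → ℝ := fun s => m*s + m*s^2/(1 - 5/6*s) with hψdef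
    set ψd : ℝ → ℝ := fun s => m + m*(2*s - 5/6*s^2)/(1 - 5/6*s)^2 with hψddef
    have hdenom : ∀ s : ℝ, s < 6/5 → (0:ℝ) < 1 - 5/6*s := by intro s hs; nlinarith
    have hψder : ∀ s : ℝ, s < 6/5 → HasDerivAt ψ (ψd s) s := by
      intro s hs
      have hd := hdenom s hs
      have h1 : HasDerivAt (fun s' : ℝ => m * s') m s := by
        simpa using (hasDerivAt_id s).const_mul m
      have h2 : HasDerivAt (fun s' : ℝ => m * s'^2) (m * (2*s)) s := by
        simpa using (hasDerivAt_pow 2 s).const_mul m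
      have h3 : HasDerivAt (fun s' : ℝ => 1 - 5/6*s') (-(5/6)) s := by
        have := ((hasDerivAt_id s).const_mul (5/6 : ℝ)).const_sub 1
        simpa using this
      have h4 := h2.fun_div h3 hd.ne'
      have h5 := h1.fun_add h4
      refine h5.congr_deriv ?_
      rw [hψddef]
      field_simp
      ring
    have hψpos : ∀ s : ℝ, 0 < s → s < 6/5 → 0 < ψ s := by
      intro s hs hs'
      have hd := hdenom s hs'
      have : 0 < m * s := mul_pos hm hs
      have h2 : 0 ≤ m * s^2 / (1 - 5/6*s) := by positivity
      show 0 < m*s + m*s^2/(1 - 5/6*s)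
      linarith
    -- antitone on Ioo
    have hanti : AntitoneOn (fun s => G s / ψ s) (Ioo 0 (6/5 : ℝ)) := by
      apply antitoneOn_of_deriv_nonpos (convex_Ioo 0 (6/5 : ℝ))
      · intro s hs
        exact ((hG s).div (hψder s hs.2) (hψpos s hs.1 hs.2).ne').continuousAt.continuousWithinAt
      · rw [interior_Ioo]
        intro s hs
        exact ((hG s).div (hψder s hs.2) (hψpos s hs.1 hs.2).ne').differentiableAt.differentiableWithinAt
      · rw [interior_Ioo]
        intro s hs
        have hder := (hG s).fun_div (hψder s hs.2) (hψpos s hs.1 hs.2).ne'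
        rw [hder.deriv]
        apply div_nonpos_of_nonpos_of_nonneg _ (sq_nonneg _)
        rw [sub_nonpos]
        have hGs' : 0 ≤ Fd s / FF s := div_nonneg (hFdnn s hs.1.le) (hFFpos s).le
        have hu := u_pos hs.1 hs.2
        have hchain1 : Fd s / FF s * ψ s ≤ Fd s / FF s
            * ((2 - s - 2*Real.exp (-s)) * ψd s) := by
          apply mul_le_mul_of_nonneg_left _ hGs'
          exact psi_le_u_mul_psid hm0 hs.1 hs.2
        have hchain2 : Fd s / FF s * ((2 - s - 2*Real.exp (-s)) * ψd s) ≤ G s * ψd s := by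
          have hψdnn := psid_nonneg hm0 hs.1 hs.2
          have := hmaster s hs.1
          calc Fd s / FF s * ((2 - s - 2*Real.exp (-s)) * ψd s)
              = ((2 - s - 2*Real.exp (-s)) * (Fd s / FF s)) * ψd s := by ring
            _ ≤ G s * ψd s := mul_le_mul_of_nonneg_right this hψdnn
        calc Fd s / FF s * ψ s ≤ _ := hchain1
          _ ≤ G s * ψd s := hchain2
    -- limit of ratio at 0+
    have hGlim : Tendsto (fun s => G s / s) (nhdsWithin 0 (Ioi 0)) (nhds m) := by
      have h1 := hasDerivAt_iff_tendsto_slope.mp (hG 0)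
      rw [hFd0, hFF0, div_one] at h1
      have h2 : Tendsto (slope G 0) (nhdsWithin 0 (Ioi 0)) (nhds m) :=
        h1.mono_left (nhdsWithin_mono 0 (fun s hs => ne_of_gt hs))
      have h3 : (slope G 0) = fun s => G s / s := by
        funext s
        rw [slope_def_field, hG0]
        simp
      rw [h3] at h2
      exact h2
    have hψlim : Tendsto (fun s => ψ s / s) (nhdsWithin 0 (Ioi 0)) (nhds m) := by
      have heq : ∀ s ∈ Ioi (0:ℝ), m + m*s/(1 - 5/6*s) = ψ s / s := by
        intro s hs
        have hs' : (0:ℝ) < s := hs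
        show m + m*s/(1 - 5/6*s) = (m*s + m*s^2/(1 - 5/6*s)) / s
        rcases eq_or_ne (1 - 5/6*s) 0 with hd | hd
        · rw [hd]
          rw [div_zero, div_zero, add_zero, add_zero, mul_div_assoc,
            div_self hs'.ne', mul_one]
        · field_simp
      have hcont : Tendsto (fun s : ℝ => m + m*s/(1 - 5/6*s)) (nhds 0)
          (nhds (m + m*0/(1 - 5/6*0))) := by
        apply Tendsto.add tendsto_const_nhds
        apply Tendsto.div
        · exact (continuous_const.mul continuous_id).tendsto 0
        · exact (continuous_const.sub (continuous_const.mul continuous_id)).tendsto 0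
        · norm_num
      have hval : m + m*0/(1 - 5/6*0) = m := by norm_num
      rw [hval] at hcont
      have := hcont.mono_left (nhdsWithin_le_nhds (s := Ioi (0:ℝ)))
      exact Tendsto.congr' (eventually_nhdsWithin_of_forall heq) this
    have hratlim : Tendsto (fun s => G s / ψ s) (nhdsWithin 0 (Ioi 0)) (nhds 1) := by
      have hdiv := hGlim.div hψlim hm.ne'
      have : m / m = 1 := div_self hm.ne'
      rw [this] at hdiv
      apply hdiv.congr'
      apply eventually_nhdsWithin_of_forall
      intro s hs
      have hs' : (0:ℝ) < s := hs
      show (G s / s) / (ψ s / s) = G s / ψ s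
      rw [div_div_div_cancel_right₀ hs'.ne']
    -- conclude G t ≤ ψ t
    have hht : G t / ψ t ≤ 1 := by
      apply ge_of_tendsto hratlim
      have hmem : Ioo (0:ℝ) t ∈ nhdsWithin (0:ℝ) (Ioi 0) :=
        Ioo_mem_nhdsGT_of_mem ⟨le_refl 0, ht⟩
      apply Filter.eventually_of_mem hmem
      intro s hs
      exact hanti ⟨hs.1, lt_trans hs.2 ht'⟩ ⟨ht, ht'⟩ hs.2.le
    have hψt := hψpos t ht ht'
    have := (div_le_one hψt).mp hht
    calc Real.log (FF t) = G t := rfl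
      _ ≤ ψ t := this
      _ = m * t + m * t^2 / (1 - 5/6*t) := rfl




end Main
end SubmodTail

open MeasureTheory ProbabilityTheory Finset

/-- Upper tail for non-negative (not necessarily monotone) submodular set functions
with marginal values in `[−1,1]`, evaluated on independent `{0,1}`-valued random
variables: `Pr[Z ≥ (1+δ) E Z] ≤ e^{−δ² E Z / (4 + 5δ/3)}` for every `δ > 0`. -/
theorem nonmonotone_submodular_upper_tail
    {Ω : Type*} [MeasurableSpace Ω] (μ : Measure Ω) [IsProbabilityMeasure μ]
    {n : ℕ} (X : Fin n → Ω → Bool) (hXm : ∀ i, Measurable (X i))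
    (hXind : iIndepFun X μ)
    (f : Finset (Fin n) → ℝ)
    (hnonneg : ∀ A : Finset (Fin n), 0 ≤ f A)
    (hsubmod : ∀ A B : Finset (Fin n), f (A ∪ B) + f (A ∩ B) ≤ f A + f B)
    (hmarg : ∀ (A : Finset (Fin n)) (j : Fin n), |f (insert j A) - f A| ≤ 1)
    (Z : Ω → ℝ) (hZ : ∀ ω, Z ω = f (univ.filter fun i => X i ω = true))
    (δ : ℝ) (hδ : 0 < δ) :
    (μ {ω | (1 + δ) * (∫ ω', Z ω' ∂μ) ≤ Z ω}).toReal
      ≤ Real.exp (-δ ^ 2 * (∫ ω', Z ω' ∂μ) / (4 + 5 * δ / 3)) := by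
  classical
  set vec : Ω → (Fin n → Bool) := fun ω i => X i ω with hvecdef
  have hvec : Measurable vec := measurable_pi_lambda _ hXm
  set g : (Fin n → Bool) → ℝ := SubmodTail.gOf f with hgdef
  have hZg : ∀ ω, Z ω = g (vec ω) := by
    intro ω
    rw [hZ ω]
    rfl
  set bw : Fin n → Bool → ℝ := fun i b => (μ (X i ⁻¹' {b})).toReal with hbwdef
  have hbw0 : ∀ i b, 0 ≤ bw i b := fun i b => ENNReal.toReal_nonneg
  have hbw1 : ∀ i, bw i true + bw i false = 1 := by
    intro i
    have hcompl : X i ⁻¹' {false} = (X i ⁻¹' {true})ᶜ := by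
      ext ω
      simp only [Set.mem_preimage, Set.mem_singleton_iff, Set.mem_compl_iff]
      cases hb : X i ω <;> simp [hb]
    show (μ (X i ⁻¹' {true})).toReal + (μ (X i ⁻¹' {false})).toReal = 1
    rw [hcompl, ← ENNReal.toReal_add (measure_ne_top μ _) (measure_ne_top μ _),
      measure_add_measure_compl (hXm i (measurableSet_singleton true))]
    simp
  -- atom weights
  have hatom : ∀ x : Fin n → Bool, (μ (vec ⁻¹' {x})).toReal = SubmodTail.wP bw x := by
    intro x
    have hset : vec ⁻¹' {x} = ⋂ i ∈ (Finset.univ : Finset (Fin n)), X i ⁻¹' {x i} := by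
      ext ω
      simp only [Set.mem_preimage, Set.mem_singleton_iff, Set.mem_iInter, funext_iff]
      constructor
      · intro h i _
        exact h i
      · intro h i
        exact h i (Finset.mem_univ i)
    have happ := hXind.measure_inter_preimage_eq_mul (S := Finset.univ)
      (sets := fun i => {x i}) (fun i _ => measurableSet_singleton (x i))
    rw [hset, happ]
    rw [ENNReal.toReal_prod]
    rfl
  set μm : Measure (Fin n → Bool) := Measure.map vec μ with hμm
  have hμmprob : IsProbabilityMeasure μm := Measure.isProbabilityMeasure_map hvec.aemeasurable
  have hint : ∀ φ : (Fin n → Bool) → ℝ,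
      ∫ ω, φ (vec ω) ∂μ = SubmodTail.Ew bw φ := by
    intro φ
    have hφm : Measurable φ := measurable_of_finite φ
    rw [← MeasureTheory.integral_map hvec.aemeasurable hφm.aestronglyMeasurable]
    rw [MeasureTheory.integral_fintype (Integrable.of_finite)]
    unfold SubmodTail.Ew
    apply Finset.sum_congr rfl
    intro x _
    rw [measureReal_def, Measure.map_apply hvec (measurableSet_singleton x), hatom x, smul_eq_mul]
  have hMean : ∫ ω', Z ω' ∂μ = SubmodTail.Ew bw g := by
    rw [← hint g]
    apply integral_congr_ae
    filter_upwards with ω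
    exact hZg ω
  set m : ℝ := SubmodTail.Ew bw g with hmdef
  -- combinatorial hypotheses
  have hg0 : ∀ x, 0 ≤ g x := fun x => hnonneg _
  have hD1 : ∀ i x, SubmodTail.Dg g i x ≤ 1 := fun i x => SubmodTail.Dg_le_one hmarg i x
  have hDsum : ∀ x, ∑ i : Fin n, SubmodTail.Dg g i x ≤ 2 * g x :=
    fun x => SubmodTail.Dg_sum_le hnonneg hsubmod x
  -- Chernoff parameter
  set t : ℝ := δ / (2 + 5/6*δ) with htdef
  have htpos : 0 < t := by
    apply div_pos hδ
    nlinarith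
  have htlt : t < 6/5 := by
    rw [htdef, div_lt_iff₀ (by nlinarith : (0:ℝ) < 2 + 5/6*δ)]
    nlinarith
  have hmgf := SubmodTail.mgf_bound hbw0 hbw1 hg0 hD1 hDsum htpos htlt
  rw [← hmdef] at hmgf
  -- integrability of exp(t Z)
  have hexpint : Integrable (fun ω => Real.exp (t * Z ω)) μ := by
    have h1 : Integrable (fun x => Real.exp (t * g x)) μm := Integrable.of_finite
    have h2 := (integrable_map_measure
      (measurable_of_finite (fun x => Real.exp (t * g x))).aestronglyMeasurable
      hvec.aemeasurable).mp h1
    apply h2.congr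
    filter_upwards with ω
    show Real.exp (t * g (vec ω)) = Real.exp (t * Z ω)
    rw [hZg ω]
  -- Chernoff bound
  have hcher := measure_ge_le_exp_mul_mgf (X := Z) (μ := μ)
    ((1 + δ) * (∫ ω', Z ω' ∂μ)) htpos.le hexpint
  have hmgfval : mgf Z μ t = SubmodTail.Ew bw (fun x => Real.exp (t * g x)) := by
    unfold mgf
    rw [← hint (fun x => Real.exp (t * g x))]
    apply integral_congr_ae
    filter_upwards with ω
    show Real.exp (t * Z ω) = Real.exp (t * g (vec ω))
    rw [hZg ω]
  -- log of mgf bound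
  have hFFpos : 0 < SubmodTail.Ew bw (fun x => Real.exp (t * g x)) := by
    have hex : ∃ x : Fin n → Bool, SubmodTail.wP bw x ≠ 0 := by
      by_contra hc
      push_neg at hc
      have : ∑ x : Fin n → Bool, SubmodTail.wP bw x = 0 :=
        Finset.sum_eq_zero (fun x _ => hc x)
      rw [SubmodTail.sum_wP hbw1] at this
      norm_num at this
    obtain ⟨x0, hx0⟩ := hex
    apply Finset.sum_pos'
    · intro x _
      exact mul_nonneg (SubmodTail.wP_nonneg hbw0 x) (Real.exp_pos _).le
    · exact ⟨x0, Finset.mem_univ x0,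
        mul_pos (lt_of_le_of_ne (SubmodTail.wP_nonneg hbw0 x0) (Ne.symm hx0))
          (Real.exp_pos _)⟩
  calc (μ {ω | (1 + δ) * (∫ ω', Z ω' ∂μ) ≤ Z ω}).toReal
      ≤ Real.exp (-t * ((1 + δ) * (∫ ω', Z ω' ∂μ))) * mgf Z μ t := hcher
    _ = Real.exp (-t * ((1 + δ) * m)
          + Real.log (SubmodTail.Ew bw (fun x => Real.exp (t * g x)))) := by
        rw [hmgfval, hMean, Real.exp_add, Real.exp_log hFFpos]
    _ ≤ Real.exp (-t * ((1 + δ) * m) + (m * t + m * t^2 / (1 - 5/6*t))) := by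
        apply Real.exp_le_exp.mpr
        linarith [hmgf]
    _ = Real.exp (-δ ^ 2 * m / (4 + 5 * δ / 3)) := by
        congr 1
        rw [htdef]
        have hden : (0:ℝ) < 2 + 5/6*δ := by nlinarith
        have hden2 : (0:ℝ) < 4 + 5 * δ / 3 := by nlinarith
        have hone : 1 - 5/6 * (δ / (2 + 5/6*δ)) = 2 / (2 + 5/6*δ) := by
          field_simp
          ring
        rw [hone]
        field_simp
        ring
    _ = Real.exp (-δ ^ 2 * (∫ ω', Z ω' ∂μ) / (4 + 5 * δ / 3)) := by
        rw [hMean]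
end

section
/- Let X_1,…,X_n ∈ {0,1} be independent random variables and let f : 2^[n] → ℝ₊ be a non-negative submodular set function (not necessarily monotone) with all marginal values in [−1,1], and set Z = f(X_1,…,X_n). Then for every δ with 0 < δ ≤ 1, Pr[Z ≤ (1−δ) E[Z]] ≤ e^{−δ² E[Z] / 4}. -/
open MeasureTheory ProbabilityTheory Finset

namespace NMSubAux

noncomputable def φ (x : ℝ) : ℝ := Real.exp x - x - 1

lemma φ_nonneg {x : ℝ} : 0 ≤ φ x := by
  have := Real.add_one_le_exp x; unfold φ; linarith

lemma φ_scale {s x : ℝ} (hs0 : 0 ≤ s) (hs1 : s ≤ 1) (hx : 0 ≤ x) :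
    φ (s * x) ≤ s * φ x := by
  have h := convexOn_exp.2 (Set.mem_univ (0:ℝ)) (Set.mem_univ x)
      (by linarith : (0:ℝ) ≤ 1 - s) hs0 (by ring)
  simp only [smul_eq_mul, mul_zero, zero_add, Real.exp_zero, mul_one] at h
  unfold φ; nlinarith [h]

lemma φ_quad {t : ℝ} (ht0 : 0 ≤ t) (ht1 : t ≤ 1) :
    φ t ≤ t^2/2 + (2/9) * t^3 := by
  have h := Real.exp_bound' ht0 ht1 (n := 3) (by norm_num)
  have e : (∑ m ∈ Finset.range 3, t ^ m / m.factorial) = 1 + t + t^2/2 := by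
    simp [Finset.sum_range_succ]
  rw [e] at h
  norm_num [Nat.factorial] at h
  unfold φ
  nlinarith [h]

/-- two-point entropy functional -/
noncomputable def entTP (p q A B : ℝ) : ℝ :=
  p * A * Real.log A + q * B * Real.log B - (p * A + q * B) * Real.log (p * A + q * B)

lemma young {x y : ℝ} (hx : 0 < x) : x * y ≤ x * Real.log x - x + Real.exp y := by
  have h := Real.add_one_le_exp (y - Real.log x)
  have he : Real.exp (y - Real.log x) = Real.exp y / x := by
    rw [Real.exp_sub, Real.exp_log hx]
  rw [he] at h
  have := (mul_le_mul_of_nonneg_left h hx.le)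
  rw [mul_div_cancel₀ _ (ne_of_gt hx)] at this
  nlinarith

lemma entTP_varLB {p q A B uT uF : ℝ} (hp : 0 ≤ p) (hq : 0 ≤ q)
    (hA : 0 < A) (hB : 0 < B) (hm : 0 < p * A + q * B)
    (hu : p * Real.exp uT + q * Real.exp uF ≤ 1) :
    p * A * uT + q * B * uF ≤ entTP p q A B := by
  set m := p * A + q * B with hmdef
  have h1 := young (x := A) (y := uT + Real.log m) hA
  have h2 := young (x := B) (y := uF + Real.log m) hB
  rw [Real.exp_add, Real.exp_log hm] at h1 h2
  have h1' := mul_le_mul_of_nonneg_left h1 hp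
  have h2' := mul_le_mul_of_nonneg_left h2 hq
  have hs := mul_le_mul_of_nonneg_left hu hm.le
  unfold entTP
  nlinarith [h1', h2', hs]

lemma entTP_nonneg {p q A B : ℝ} (hp : 0 ≤ p) (hq : 0 ≤ q)
    (hA : 0 < A) (hB : 0 < B) (hm : 0 < p * A + q * B) (hpq : p + q = 1) :
    0 ≤ entTP p q A B := by
  have := entTP_varLB (uT := 0) (uF := 0) hp hq hA hB hm (by simp [Real.exp_zero]; linarith)
  simpa using this

lemma entTP_varUB {p q A B t : ℝ} (hp : 0 ≤ p) (hq : 0 ≤ q) (hpq : p + q = 1)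
    (hA : 0 < A) (hB : 0 < B) (ht : 0 < t) :
    entTP p q A B ≤ p * (A * Real.log A - A * Real.log t - A + t)
      + q * (B * Real.log B - B * Real.log t - B + t) := by
  have hm : 0 < p * A + q * B := by
    rcases lt_or_ge 0 p with h | h
    · nlinarith
    · have hp0 : p = 0 := le_antisymm (by linarith) hp
      have : q = 1 := by linarith
      nlinarith
  have hlog := Real.log_le_sub_one_of_pos (div_pos ht hm)
  rw [Real.log_div (ne_of_gt ht) (ne_of_gt hm)] at hlog
  have key : (p * A + q * B) * (Real.log t - Real.log (p * A + q * B))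
      ≤ t - (p * A + q * B) := by
    have h2 := mul_le_mul_of_nonneg_left hlog hm.le
    have h3 : (p * A + q * B) * (t / (p * A + q * B) - 1) = t - (p * A + q * B) := by
      field_simp
    nlinarith [h2]
  have main : p * (A * Real.log A - A * Real.log t - A + t)
      + q * (B * Real.log B - B * Real.log t - B + t) - entTP p q A B
      = ((p * A + q * B) * Real.log (p * A + q * B)
          - (p * A + q * B) * Real.log t) - (p * A + q * B) + t := by
    have hq1 : q = 1 - p := by linarith
    unfold entTP
    rw [hq1]; ring
  nlinarith [key, main]


lemma convex_pos {p q A B : ℝ} (hp : 0 ≤ p) (hq : 0 ≤ q) (hpq : p + q = 1)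
    (hA : 0 < A) (hB : 0 < B) : 0 < p * A + q * B := by
  rcases le_or_gt p 0 with h | h
  · have hp0 : p = 0 := le_antisymm h hp
    have hq1 : q = 1 := by linarith
    rw [hp0, hq1]; simpa using hB
  · nlinarith [mul_nonneg hq hB.le, mul_pos h hA]

lemma entTP_jensen {ι : Type*} [Fintype ι] {p q : ℝ} (hp : 0 ≤ p) (hq : 0 ≤ q)
    (hpq : p + q = 1) (c A B : ι → ℝ) (hc : ∀ i, 0 ≤ c i)
    (hA : ∀ i, 0 < A i) (hB : ∀ i, 0 < B i) :
    entTP p q (∑ i, c i * A i) (∑ i, c i * B i)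
      ≤ ∑ i, c i * entTP p q (A i) (B i) := by
  classical
  by_cases hall : ∀ i, c i = 0
  · simp [entTP, hall]
  · push_neg at hall
    obtain ⟨i0, hi0⟩ := hall
    have hci0 : 0 < c i0 := lt_of_le_of_ne (hc i0) (Ne.symm hi0)
    have hSA : 0 < ∑ i, c i * A i := by
      have h1 : c i0 * A i0 ≤ ∑ i, c i * A i :=
        Finset.single_le_sum (f := fun i => c i * A i)
          (fun i _ => mul_nonneg (hc i) (hA i).le) (mem_univ i0)
      nlinarith [(hA i0)]
    have hSB : 0 < ∑ i, c i * B i := by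
      have h1 : c i0 * B i0 ≤ ∑ i, c i * B i :=
        Finset.single_le_sum (f := fun i => c i * B i)
          (fun i _ => mul_nonneg (hc i) (hB i).le) (mem_univ i0)
      nlinarith [(hB i0)]
    set SA := ∑ i, c i * A i
    set SB := ∑ i, c i * B i
    have hM : 0 < p * SA + q * SB := convex_pos hp hq hpq hSA hSB
    set uT := Real.log SA - Real.log (p * SA + q * SB) with huT
    set uF := Real.log SB - Real.log (p * SA + q * SB) with huF
    have heT : Real.exp uT = SA / (p * SA + q * SB) := by
      rw [huT, Real.exp_sub, Real.exp_log hSA, Real.exp_log hM]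
    have heF : Real.exp uF = SB / (p * SA + q * SB) := by
      rw [huF, Real.exp_sub, Real.exp_log hSB, Real.exp_log hM]
    have hLHS : entTP p q SA SB = p * SA * uT + q * SB * uF := by
      unfold entTP
      rw [huT, huF]; ring
    have hstep : p * SA * uT + q * SB * uF
        = ∑ i, c i * (p * A i * uT + q * B i * uF) := by
      rw [Finset.sum_congr rfl (fun i _ => by ring :
        ∀ i ∈ univ, c i * (p * A i * uT + q * B i * uF)
          = p * (c i * A i) * uT + q * (c i * B i) * uF)]
      rw [Finset.sum_add_distrib, ← Finset.sum_mul, ← Finset.sum_mul,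
        ← Finset.mul_sum, ← Finset.mul_sum]
    rw [hLHS, hstep]
    apply Finset.sum_le_sum
    intro i _
    apply mul_le_mul_of_nonneg_left _ (hc i)
    apply entTP_varLB hp hq (hA i) (hB i)
    · exact convex_pos hp hq hpq (hA i) (hB i)
    · rw [heT, heF]
      rw [mul_div_assoc', mul_div_assoc', ← add_div, div_self (ne_of_gt hM)]

noncomputable def W {n : ℕ} (ν : Fin n → Bool → ℝ) (x : Fin n → Bool) : ℝ := ∏ i, ν i (x i)

noncomputable def gmin {n : ℕ} (g : (Fin n → Bool) → ℝ) (j : Fin n) (x : Fin n → Bool) : ℝ :=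
  min (g (Function.update x j true)) (g (Function.update x j false))

lemma gmin_le {n : ℕ} (g : (Fin n → Bool) → ℝ) (j : Fin n) (x : Fin n → Bool) :
    gmin g j x ≤ g x := by
  unfold gmin
  cases hxj : x j with
  | false =>
    have h : Function.update x j false = x := by rw [← hxj, Function.update_eq_self]
    rw [h]; exact min_le_right _ _
  | true =>
    have h : Function.update x j true = x := by rw [← hxj, Function.update_eq_self]
    rw [h]; exact min_le_left _ _

lemma W_nonneg {n : ℕ} (ν : Fin n → Bool → ℝ) (hν0 : ∀ i b, 0 ≤ ν i b)
    (x : Fin n → Bool) : 0 ≤ W ν x :=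
  Finset.prod_nonneg fun i _ => hν0 i (x i)

lemma sum_split {n : ℕ} (F : (Fin (n+1) → Bool) → ℝ) :
    ∑ x, F x = (∑ y : Fin n → Bool, F (Fin.cons true y))
      + ∑ y : Fin n → Bool, F (Fin.cons false y) := by
  rw [← Equiv.sum_comp (Fin.consEquiv fun _ => Bool) F]
  rw [Fintype.sum_prod_type, Fintype.sum_bool]
  rfl

lemma W_cons {n : ℕ} (ν : Fin (n+1) → Bool → ℝ) (b : Bool) (y : Fin n → Bool) :
    W ν (Fin.cons b y) = ν 0 b * W (fun i => ν i.succ) y := by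
  unfold W
  rw [Fin.prod_univ_succ]
  simp

lemma gmin_cons_succ {n : ℕ} (g : (Fin (n+1) → Bool) → ℝ) (b : Bool) (j : Fin n)
    (y : Fin n → Bool) :
    gmin g j.succ (Fin.cons b y) = gmin (fun z => g (Fin.cons b z)) j y := by
  unfold gmin
  rw [← Fin.cons_update, ← Fin.cons_update]

lemma gmin_cons_zero {n : ℕ} (g : (Fin (n+1) → Bool) → ℝ) (b : Bool) (y : Fin n → Bool) :
    gmin g 0 (Fin.cons b y) = min (g (Fin.cons true y)) (g (Fin.cons false y)) := by
  unfold gmin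
  rw [Fin.update_cons_zero, Fin.update_cons_zero]


lemma W_sum_one {n : ℕ} (ν : Fin n → Bool → ℝ) (hν1 : ∀ i, ν i true + ν i false = 1) :
    ∑ x, W ν x = 1 := by
  unfold W
  have h := Finset.prod_univ_sum (κ := fun _ : Fin n => Bool)
    (fun _ => (Finset.univ : Finset Bool)) (fun i b => ν i b)
  have h2 : ∀ i : Fin n, ∑ b : Bool, ν i b = 1 := by
    intro i; rw [Fintype.sum_bool]; exact hν1 i
  simp only [h2, Finset.prod_const_one] at h
  rw [Fintype.piFinset_univ] at h
  exact h.symm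

lemma sumWexp_pos {n : ℕ} (ν : Fin n → Bool → ℝ) (hν0 : ∀ i b, 0 ≤ ν i b)
    (hν1 : ∀ i, ν i true + ν i false = 1) (u : (Fin n → Bool) → ℝ) :
    0 < ∑ x, W ν x * Real.exp (u x) := by
  have h1 : ∑ x, W ν x = 1 := W_sum_one ν hν1
  have h2 : ∃ x : Fin n → Bool, W ν x ≠ 0 := by
    by_contra h
    push_neg at h
    rw [Finset.sum_eq_zero (fun x _ => h x)] at h1
    norm_num at h1
  obtain ⟨x0, hx0⟩ := h2
  have hx0' : 0 < W ν x0 := lt_of_le_of_ne (W_nonneg ν hν0 x0) (Ne.symm hx0)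
  calc (0:ℝ) < W ν x0 * Real.exp (u x0) := mul_pos hx0' (Real.exp_pos _)
  _ ≤ ∑ x, W ν x * Real.exp (u x) :=
      Finset.single_le_sum (f := fun x => W ν x * Real.exp (u x))
        (fun x _ => mul_nonneg (W_nonneg ν hν0 x) (Real.exp_pos _).le) (mem_univ x0)

lemma entTP_exp_bound {p q lam a b : ℝ} (hp : 0 ≤ p) (hq : 0 ≤ q) (hpq : p + q = 1)
    (hlam : lam ≤ 0) (h1 : a - min a b ≤ 1) (h2 : b - min a b ≤ 1) :
    entTP p q (Real.exp (lam * a)) (Real.exp (lam * b))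
      ≤ φ (-lam) * (p * Real.exp (lam * a) * (a - min a b)
          + q * Real.exp (lam * b) * (b - min a b)) := by
  have hub := entTP_varUB (A := Real.exp (lam * a)) (B := Real.exp (lam * b))
    (t := Real.exp (lam * min a b)) hp hq hpq
    (Real.exp_pos _) (Real.exp_pos _) (Real.exp_pos _)
  rw [Real.log_exp, Real.log_exp, Real.log_exp] at hub
  have et : Real.exp (lam * a) * (lam * a) - Real.exp (lam * a) * (lam * min a b)
        - Real.exp (lam * a) + Real.exp (lam * min a b)
      = Real.exp (lam * a) * φ ((a - min a b) * (-lam)) := by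
    unfold φ
    have hsplit : Real.exp ((a - min a b) * (-lam))
        = Real.exp (lam * min a b) / Real.exp (lam * a) := by
      rw [eq_div_iff (ne_of_gt (Real.exp_pos _)), ← Real.exp_add]
      ring_nf
    rw [hsplit]
    field_simp
    ring
  have ef : Real.exp (lam * b) * (lam * b) - Real.exp (lam * b) * (lam * min a b)
        - Real.exp (lam * b) + Real.exp (lam * min a b)
      = Real.exp (lam * b) * φ ((b - min a b) * (-lam)) := by
    unfold φ
    have hsplit : Real.exp ((b - min a b) * (-lam))
        = Real.exp (lam * min a b) / Real.exp (lam * b) := by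
      rw [eq_div_iff (ne_of_gt (Real.exp_pos _)), ← Real.exp_add]
      ring_nf
    rw [hsplit]
    field_simp
    ring
  have hsc1 : φ ((a - min a b) * (-lam)) ≤ (a - min a b) * φ (-lam) :=
    φ_scale (by simp [sub_nonneg, min_le_left]) h1 (by linarith)
  have hsc2 : φ ((b - min a b) * (-lam)) ≤ (b - min a b) * φ (-lam) :=
    φ_scale (by simp [sub_nonneg, min_le_right]) h2 (by linarith)
  have hea := Real.exp_pos (lam * a)
  have heb := Real.exp_pos (lam * b)
  nlinarith [mul_le_mul_of_nonneg_left hsc1 (mul_nonneg hp hea.le),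
    mul_le_mul_of_nonneg_left hsc2 (mul_nonneg hq heb.le), hub, et, ef]

theorem ent_tensor (lam : ℝ) (hlam : lam ≤ 0) (n : ℕ) (ν : Fin n → Bool → ℝ)
    (hν0 : ∀ i b, 0 ≤ ν i b) (hν1 : ∀ i, ν i true + ν i false = 1)
    (g : (Fin n → Bool) → ℝ)
    (hg1 : ∀ x j, g x - gmin g j x ≤ 1) :
    (∑ x, W ν x * (lam * g x * Real.exp (lam * g x)))
      - (∑ x, W ν x * Real.exp (lam * g x)) * Real.log (∑ x, W ν x * Real.exp (lam * g x))
    ≤ φ (-lam) * ∑ x, W ν x * (Real.exp (lam * g x) * (∑ j, (g x - gmin g j x))) := by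
  induction n with
  | zero =>
    have : ∀ (F : (Fin 0 → Bool) → ℝ), ∑ x, F x = F (fun i => i.elim0) :=
      fun F => by
        rw [Fintype.sum_eq_single (fun i => i.elim0)]
        intro x hx
        exact absurd (funext fun i => i.elim0) hx
    rw [this, this, this]
    have hW : W ν (fun i => i.elim0) = 1 := by
      unfold W; exact Finset.prod_of_isEmpty _
    rw [hW]
    simp [Real.log_exp]
    ring_nf
    exact le_refl _
  | succ n IH =>
    have hp : 0 ≤ ν 0 true := hν0 0 true
    have hq : 0 ≤ ν 0 false := hν0 0 false
    have hpq : ν 0 true + ν 0 false = 1 := hν1 0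
    have hν'0 : ∀ (i : Fin n) (b : Bool), 0 ≤ ν i.succ b := fun i b => hν0 i.succ b
    have hν'1 : ∀ i : Fin n, ν i.succ true + ν i.succ false = 1 := fun i => hν1 i.succ
    have hsum : ∀ F : (Fin (n+1) → Bool) → ℝ,
        ∑ x, W ν x * F x
          = ν 0 true * (∑ y, W (fun i => ν i.succ) y * F (Fin.cons true y))
            + ν 0 false * (∑ y, W (fun i => ν i.succ) y * F (Fin.cons false y)) := by
      intro F
      rw [sum_split (fun x => W ν x * F x), Finset.mul_sum, Finset.mul_sum]
      congr 1 <;> exact Finset.sum_congr rfl fun y _ => by rw [W_cons]; ring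
    have hg1t : ∀ (y : Fin n → Bool) (j : Fin n),
        (fun z => g (Fin.cons true z)) y - gmin (fun z => g (Fin.cons true z)) j y ≤ 1 := by
      intro y j; rw [← gmin_cons_succ]; exact hg1 (Fin.cons true y) j.succ
    have hg1f : ∀ (y : Fin n → Bool) (j : Fin n),
        (fun z => g (Fin.cons false z)) y - gmin (fun z => g (Fin.cons false z)) j y ≤ 1 := by
      intro y j; rw [← gmin_cons_succ]; exact hg1 (Fin.cons false y) j.succ
    have IHt := IH (fun i => ν i.succ) hν'0 hν'1 (fun z => g (Fin.cons true z)) hg1t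
    have IHf := IH (fun i => ν i.succ) hν'0 hν'1 (fun z => g (Fin.cons false z)) hg1f
    simp only [← gmin_cons_succ] at IHt IHf
    have houter : entTP (ν 0 true) (ν 0 false)
        (∑ y, W (fun i => ν i.succ) y * Real.exp (lam * g (Fin.cons true y)))
        (∑ y, W (fun i => ν i.succ) y * Real.exp (lam * g (Fin.cons false y)))
        ≤ φ (-lam) * ∑ y, W (fun i => ν i.succ) y *
            (ν 0 true * Real.exp (lam * g (Fin.cons true y)) *
              (g (Fin.cons true y) - min (g (Fin.cons true y)) (g (Fin.cons false y)))
             + ν 0 false * Real.exp (lam * g (Fin.cons false y)) *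
              (g (Fin.cons false y) - min (g (Fin.cons true y)) (g (Fin.cons false y)))) := by
      have hj := entTP_jensen hp hq hpq (fun y => W (fun i => ν i.succ) y)
        (fun y => Real.exp (lam * g (Fin.cons true y)))
        (fun y => Real.exp (lam * g (Fin.cons false y)))
        (fun y => W_nonneg _ hν'0 y) (fun y => Real.exp_pos _) (fun y => Real.exp_pos _)
      refine le_trans hj ?_
      rw [Finset.mul_sum]
      apply Finset.sum_le_sum
      intro y _
      have hb := entTP_exp_bound (p := ν 0 true) (q := ν 0 false) (lam := lam)
        (a := g (Fin.cons true y)) (b := g (Fin.cons false y)) hp hq hpq hlam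
        (by have := hg1 (Fin.cons true y) 0; rwa [gmin_cons_zero] at this)
        (by have := hg1 (Fin.cons false y) 0; rwa [gmin_cons_zero] at this)
      have hWy : 0 ≤ W (fun i => ν i.succ) y := W_nonneg _ hν'0 y
      calc W (fun i => ν i.succ) y *
            entTP (ν 0 true) (ν 0 false) (Real.exp (lam * g (Fin.cons true y)))
              (Real.exp (lam * g (Fin.cons false y)))
          ≤ W (fun i => ν i.succ) y * (φ (-lam) *
            (ν 0 true * Real.exp (lam * g (Fin.cons true y)) *
              (g (Fin.cons true y) - min (g (Fin.cons true y)) (g (Fin.cons false y)))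
             + ν 0 false * Real.exp (lam * g (Fin.cons false y)) *
              (g (Fin.cons false y) - min (g (Fin.cons true y)) (g (Fin.cons false y))))) :=
            mul_le_mul_of_nonneg_left hb hWy
        _ = φ (-lam) * (W (fun i => ν i.succ) y *
            (ν 0 true * Real.exp (lam * g (Fin.cons true y)) *
              (g (Fin.cons true y) - min (g (Fin.cons true y)) (g (Fin.cons false y)))
             + ν 0 false * Real.exp (lam * g (Fin.cons false y)) *
              (g (Fin.cons false y) - min (g (Fin.cons true y)) (g (Fin.cons false y))))) := by
            ring
    -- rewrite the goal
    rw [hsum (fun x => lam * g x * Real.exp (lam * g x)),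
        hsum (fun x => Real.exp (lam * g x)),
        hsum (fun x => Real.exp (lam * g x) * (∑ j, (g x - gmin g j x)))]
    have hsplitT : ∀ y : Fin n → Bool,
        (∑ j : Fin (n+1), (g (Fin.cons true y) - gmin g j (Fin.cons true y)))
          = (g (Fin.cons true y) - min (g (Fin.cons true y)) (g (Fin.cons false y)))
            + ∑ j : Fin n, (g (Fin.cons true y) - gmin g j.succ (Fin.cons true y)) := by
      intro y; rw [Fin.sum_univ_succ, gmin_cons_zero]
    have hsplitF : ∀ y : Fin n → Bool,
        (∑ j : Fin (n+1), (g (Fin.cons false y) - gmin g j (Fin.cons false y)))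
          = (g (Fin.cons false y) - min (g (Fin.cons true y)) (g (Fin.cons false y)))
            + ∑ j : Fin n, (g (Fin.cons false y) - gmin g j.succ (Fin.cons false y)) := by
      intro y; rw [Fin.sum_univ_succ, gmin_cons_zero]
    simp only [hsplitT, hsplitF]
    have hdist : ∀ (e A B : (Fin n → Bool) → ℝ),
        ∑ y, W (fun i => ν i.succ) y * (e y * (A y + B y))
          = (∑ y, W (fun i => ν i.succ) y * (e y * A y))
            + ∑ y, W (fun i => ν i.succ) y * (e y * B y) := by
      intro e A B
      rw [← Finset.sum_add_distrib]
      exact Finset.sum_congr rfl fun y _ => by ring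
    rw [hdist (fun y => Real.exp (lam * g (Fin.cons true y)))
          (fun y => g (Fin.cons true y) - min (g (Fin.cons true y)) (g (Fin.cons false y)))
          (fun y => ∑ j : Fin n, (g (Fin.cons true y) - gmin g j.succ (Fin.cons true y))),
        hdist (fun y => Real.exp (lam * g (Fin.cons false y)))
          (fun y => g (Fin.cons false y) - min (g (Fin.cons true y)) (g (Fin.cons false y)))
          (fun y => ∑ j : Fin n, (g (Fin.cons false y) - gmin g j.succ (Fin.cons false y)))]
    have hS0 : ∑ y, W (fun i => ν i.succ) y *
            (ν 0 true * Real.exp (lam * g (Fin.cons true y)) *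
              (g (Fin.cons true y) - min (g (Fin.cons true y)) (g (Fin.cons false y)))
             + ν 0 false * Real.exp (lam * g (Fin.cons false y)) *
              (g (Fin.cons false y) - min (g (Fin.cons true y)) (g (Fin.cons false y))))
        = ν 0 true * (∑ y, W (fun i => ν i.succ) y * (Real.exp (lam * g (Fin.cons true y)) *
              (g (Fin.cons true y) - min (g (Fin.cons true y)) (g (Fin.cons false y)))))
          + ν 0 false * (∑ y, W (fun i => ν i.succ) y * (Real.exp (lam * g (Fin.cons false y)) *
              (g (Fin.cons false y) - min (g (Fin.cons true y)) (g (Fin.cons false y))))) := by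
      rw [Finset.mul_sum, Finset.mul_sum, ← Finset.sum_add_distrib]
      exact Finset.sum_congr rfl fun y _ => by ring
    rw [hS0] at houter
    have f1 := mul_le_mul_of_nonneg_left IHt hp
    have f2 := mul_le_mul_of_nonneg_left IHf hq
    unfold entTP at houter
    nlinarith [f1, f2, houter]

variable {n : ℕ}

lemma marg_mono (f : Finset (Fin n) → ℝ)
    (hsub : ∀ A B : Finset (Fin n), f (A ∪ B) + f (A ∩ B) ≤ f A + f B)
    {S T : Finset (Fin n)} (hST : S ⊆ T) {j : Fin n} (hj : j ∉ T) :
    f (insert j T) - f T ≤ f (insert j S) - f S := by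
  have h := hsub (insert j S) T
  have h1 : insert j S ∪ T = insert j T := by
    rw [Finset.insert_union, Finset.union_eq_right.2 hST]
  have h2 : insert j S ∩ T = S := by
    rw [Finset.insert_inter_of_notMem hj, Finset.inter_eq_left.2 hST]
  rw [h1, h2] at h; linarith

lemma claim1 (f : Finset (Fin n) → ℝ)
    (hsub : ∀ A B : Finset (Fin n), f (A ∪ B) + f (A ∩ B) ≤ f A + f B)
    (A : Finset (Fin n)) :
    ∀ B : Finset (Fin n), B ⊆ A →
      ∑ j ∈ B, (f A - f (A.erase j)) ≤ f A - f (A \ B) := by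
  intro B
  induction B using Finset.induction_on with
  | empty => simp
  | @insert b B' hb ih =>
    intro hBA
    have hbA : b ∈ A := hBA (mem_insert_self b B')
    have hB'A : B' ⊆ A := (Finset.insert_subset_iff.1 hBA).2
    rw [Finset.sum_insert hb]
    have hmono : f A - f (A.erase b) ≤ f (A \ B') - f ((A \ B').erase b) := by
      have hS : (A \ B').erase b ⊆ A.erase b :=
        Finset.erase_subset_erase _ Finset.sdiff_subset
      have hjT : b ∉ A.erase b := Finset.notMem_erase _ _
      have h := marg_mono f hsub hS hjT
      rw [Finset.insert_erase hbA,
        Finset.insert_erase (by rw [Finset.mem_sdiff]; exact ⟨hbA, hb⟩)] at h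
      linarith
    have hsd : A \ insert b B' = (A \ B').erase b := by
      ext i
      simp only [Finset.mem_sdiff, Finset.mem_erase, Finset.mem_insert]
      tauto
    rw [hsd]
    have := ih hB'A
    linarith

lemma claim2 (f : Finset (Fin n) → ℝ)
    (hsub : ∀ A B : Finset (Fin n), f (A ∪ B) + f (A ∩ B) ≤ f A + f B)
    (A : Finset (Fin n)) :
    ∀ C : Finset (Fin n), Disjoint C A →
      ∑ j ∈ C, (f A - f (insert j A)) ≤ f A - f (A ∪ C) := by
  intro C
  induction C using Finset.induction_on with
  | empty => simp
  | @insert c C' hc ih =>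
    intro hdisj
    have hcA : c ∉ A := by
      have := Finset.disjoint_left.1 hdisj (mem_insert_self c C')
      exact this
    have hC'A : Disjoint C' A :=
      Finset.disjoint_of_subset_left (Finset.subset_insert c C') hdisj
    rw [Finset.sum_insert hc]
    have hmono : f A - f (insert c A) ≤ f (A ∪ C') - f (insert c (A ∪ C')) := by
      have hS : A ⊆ A ∪ C' := Finset.subset_union_left
      have hjT : c ∉ A ∪ C' := by
        rw [Finset.mem_union]
        push_neg
        exact ⟨hcA, hc⟩
      have h := marg_mono f hsub hS hjT
      linarith
    have hun : A ∪ insert c C' = insert c (A ∪ C') := by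
      ext i
      simp only [Finset.mem_union, Finset.mem_insert]
      tauto
    rw [hun]
    have := ih hC'A
    linarith

lemma submod_selfbound (f : Finset (Fin n) → ℝ)
    (hnonneg : ∀ A, 0 ≤ f A)
    (hsub : ∀ A B : Finset (Fin n), f (A ∪ B) + f (A ∩ B) ≤ f A + f B)
    (A : Finset (Fin n)) :
    ∑ j : Fin n, (f A - min (f (insert j A)) (f (A.erase j))) ≤ 2 * f A := by
  classical
  rw [← Finset.sum_add_sum_compl A]
  have hpart1 : ∑ j ∈ A, (f A - min (f (insert j A)) (f (A.erase j))) ≤ f A := by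
    have hins : ∀ j ∈ A, f A - min (f (insert j A)) (f (A.erase j))
        = f A - min (f A) (f (A.erase j)) := fun j hj => by
      rw [Finset.insert_eq_self.2 hj]
    rw [Finset.sum_congr rfl hins]
    have hsplit : ∑ j ∈ A, (f A - min (f A) (f (A.erase j)))
        = ∑ j ∈ A.filter (fun j => f (A.erase j) < f A), (f A - f (A.erase j)) := by
      rw [Finset.sum_filter]
      apply Finset.sum_congr rfl
      intro j _
      by_cases h : f (A.erase j) < f A
      · rw [if_pos h, min_eq_right h.le]
      · rw [if_neg h, min_eq_left (le_of_not_gt h)]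
        ring
    rw [hsplit]
    have h1 := claim1 f hsub A (A.filter (fun j => f (A.erase j) < f A))
      (Finset.filter_subset _ _)
    have h2 := hnonneg (A \ A.filter (fun j => f (A.erase j) < f A))
    linarith
  have hpart2 : ∑ j ∈ Aᶜ, (f A - min (f (insert j A)) (f (A.erase j))) ≤ f A := by
    have hers : ∀ j ∈ Aᶜ, f A - min (f (insert j A)) (f (A.erase j))
        = f A - min (f (insert j A)) (f A) := fun j hj => by
      rw [Finset.erase_eq_self.2 (Finset.mem_compl.1 hj)]
    rw [Finset.sum_congr rfl hers]
    have hsplit : ∑ j ∈ Aᶜ, (f A - min (f (insert j A)) (f A))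
        = ∑ j ∈ Aᶜ.filter (fun j => f (insert j A) < f A), (f A - f (insert j A)) := by
      rw [Finset.sum_filter]
      apply Finset.sum_congr rfl
      intro j _
      by_cases h : f (insert j A) < f A
      · rw [if_pos h, min_eq_left h.le]
      · rw [if_neg h, min_eq_right (le_of_not_gt h)]
        ring
    rw [hsplit]
    have hdisj : Disjoint (Aᶜ.filter (fun j => f (insert j A) < f A)) A := by
      apply Finset.disjoint_left.2
      intro j hj hjA
      have := Finset.mem_compl.1 (Finset.mem_of_mem_filter j hj)
      exact this hjA
    have h1 := claim2 f hsub A (Aᶜ.filter (fun j => f (insert j A) < f A)) hdisj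
    have h2 := hnonneg (A ∪ Aᶜ.filter (fun j => f (insert j A) < f A))
    linarith
  linarith

lemma term_le_one (f : Finset (Fin n) → ℝ)
    (hmarg : ∀ (A : Finset (Fin n)) (j : Fin n), |f (insert j A) - f A| ≤ 1)
    (A : Finset (Fin n)) (j : Fin n) :
    f A - min (f (insert j A)) (f (A.erase j)) ≤ 1 := by
  by_cases hj : j ∈ A
  · have h := (abs_le.1 (hmarg (A.erase j) j)).2
    rw [Finset.insert_erase hj] at h
    have : f A - 1 ≤ min (f (insert j A)) (f (A.erase j)) := by
      apply le_min
      · have h2 := (abs_le.1 (hmarg A j)).1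
        linarith
      · linarith
    linarith
  · rw [Finset.erase_eq_self.2 hj]
    have h := (abs_le.1 (hmarg A j)).1
    have : f A - 1 ≤ min (f (insert j A)) (f A) := by
      apply le_min <;> linarith
    linarith

def toSet (x : Fin n → Bool) : Finset (Fin n) := univ.filter (fun i => x i = true)

lemma toSet_update_true (x : Fin n → Bool) (j : Fin n) :
    toSet (Function.update x j true) = insert j (toSet x) := by
  ext i
  simp only [toSet, Finset.mem_filter, Finset.mem_univ, true_and, Finset.mem_insert,
    Function.update_apply]
  by_cases h : i = j <;> simp [h]

lemma toSet_update_false (x : Fin n → Bool) (j : Fin n) :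
    toSet (Function.update x j false) = (toSet x).erase j := by
  ext i
  simp only [toSet, Finset.mem_filter, Finset.mem_univ, true_and, Finset.mem_erase,
    Function.update_apply]
  by_cases h : i = j <;> simp [h]


lemma sum_wexp_pos {ι : Type*} [Fintype ι] (W : ι → ℝ) (hW0 : ∀ x, 0 ≤ W x)
    (hW1 : ∑ x, W x = 1) (v : ι → ℝ) : 0 < ∑ x, W x * Real.exp (v x) := by
  have h2 : ∃ x : ι, W x ≠ 0 := by
    by_contra h
    push_neg at h
    rw [Finset.sum_eq_zero (fun x _ => h x)] at hW1
    norm_num at hW1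
  obtain ⟨x0, hx0⟩ := h2
  have hx0' : 0 < W x0 := lt_of_le_of_ne (hW0 x0) (Ne.symm hx0)
  calc (0:ℝ) < W x0 * Real.exp (v x0) := mul_pos hx0' (Real.exp_pos _)
  _ ≤ ∑ x, W x * Real.exp (v x) :=
      Finset.single_le_sum (f := fun x => W x * Real.exp (v x))
        (fun x _ => mul_nonneg (hW0 x) (Real.exp_pos _).le) (mem_univ x0)

theorem herbst {ι : Type*} [Fintype ι] (W g : ι → ℝ)
    (hW0 : ∀ x, 0 ≤ W x) (hW1 : ∑ x, W x = 1) (hg0 : ∀ x, 0 ≤ g x)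
    (u : ℝ) (hu0 : 0 < u) (hu1 : u ≤ 1/2)
    (hkey : ∀ s, -u ≤ s → s ≤ 0 →
      (∑ x, W x * (s * g x * Real.exp (s * g x)))
        - (∑ x, W x * Real.exp (s * g x)) * Real.log (∑ x, W x * Real.exp (s * g x))
      ≤ 2 * φ (-s) * (∑ x, W x * (g x * Real.exp (s * g x)))) :
    Real.log (∑ x, W x * Real.exp (-u * g x)) * (1 + (1 + 4*u/9) * u)
      ≤ -u * (∑ x, W x * g x) := by
  set m := ∑ x, W x * g x with hm_def
  set c0 : ℝ := 1 + 4*u/9 with hc0_def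
  set F : ℝ → ℝ := fun s => ∑ x, W x * Real.exp (s * g x) with hF_def
  set Fd : ℝ → ℝ := fun s => ∑ x, W x * (g x * Real.exp (s * g x)) with hFd_def
  have hFpos : ∀ s, 0 < F s := fun s => sum_wexp_pos W hW0 hW1 _
  have hF : ∀ s, HasDerivAt F (Fd s) s := by
    intro s
    have h : ∀ x ∈ (univ : Finset ι), HasDerivAt (fun t => W x * Real.exp (t * g x))
        (W x * (g x * Real.exp (s * g x))) s := by
      intro x _
      have h1 : HasDerivAt (fun t : ℝ => t * g x) (g x) s := by
        simpa using (hasDerivAt_id s).mul_const (g x)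
      have h2 := h1.exp
      have h3 := h2.const_mul (W x)
      exact h3.congr_deriv (by ring)
    have := HasDerivAt.fun_sum h
    convert this using 1
  have hFd0 : ∀ s, 0 ≤ Fd s := fun s =>
    Finset.sum_nonneg fun x _ => mul_nonneg (hW0 x)
      (mul_nonneg (hg0 x) (Real.exp_pos _).le)
  set G : ℝ → ℝ := fun s => Real.log (F s) with hG_def
  have hG : ∀ s, HasDerivAt G (Fd s / F s) s := fun s =>
    (hF s).log (ne_of_gt (hFpos s))
  have hF0 : F 0 = 1 := by
    simp only [hF_def]
    simp [hW1]
  have hG0 : G 0 = 0 := by simp only [hG_def]; simp [hF0]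
  have hFd00 : Fd 0 = m := by
    simp only [hFd_def, hm_def]
    simp
  -- key2
  have key2 : ∀ s, -u ≤ s → s ≤ 0 → s * Fd s - F s * G s ≤ c0 * s^2 * Fd s := by
    intro s hs1 hs2
    have h1 := hkey s hs1 hs2
    have e1 : ∑ x, W x * (s * g x * Real.exp (s * g x)) = s * Fd s := by
      rw [hFd_def, Finset.mul_sum]
      exact Finset.sum_congr rfl fun x _ => by ring
    rw [e1] at h1
    have hφ : 2 * φ (-s) ≤ c0 * s^2 := by
      have hq := φ_quad (t := -s) (by linarith) (by linarith)
      have hcube : (-s)^3 = (-s) * s^2 := by ring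
      have h4 : (-s) * s^2 ≤ u * s^2 :=
        mul_le_mul_of_nonneg_right (by linarith) (sq_nonneg s)
      have hsq : (-s)^2 = s^2 := by ring
      rw [hsq, hcube] at hq
      rw [hc0_def]
      nlinarith [hq, h4]
    have := mul_le_mul_of_nonneg_right hφ (hFd0 s)
    calc s * Fd s - F s * G s ≤ 2 * φ (-s) * Fd s := h1
    _ ≤ c0 * s^2 * Fd s := this
  -- the function Ψ
  set R : ℝ → ℝ := fun s => if s = 0 then m else G s / s with hR_def
  set Ψ : ℝ → ℝ := fun s => c0 * G s - R s with hΨ_def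
  have hGcont : Continuous G := continuous_iff_continuousAt.2 fun s => (hG s).continuousAt
  -- continuity of R on Icc
  have hRcont : ContinuousOn R (Set.Icc (-u) 0) := by
    intro s hs
    by_cases h0 : s = 0
    · subst h0
      rw [← continuousWithinAt_diff_self]
      have hslope : Filter.Tendsto (slope G 0) (nhdsWithin 0 {(0:ℝ)}ᶜ) (nhds (Fd 0 / F 0)) :=
        hasDerivAt_iff_tendsto_slope.1 (hG 0)
      rw [hF0, hFd00, div_one] at hslope
      have hmono : nhdsWithin (0:ℝ) (Set.Icc (-u) 0 \ {0}) ≤ nhdsWithin 0 {(0:ℝ)}ᶜ := by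
        apply nhdsWithin_mono
        intro t ht
        exact ht.2
      have htend := hslope.mono_left hmono
      have : Filter.Tendsto R (nhdsWithin (0:ℝ) (Set.Icc (-u) 0 \ {0})) (nhds m) := by
        refine Filter.Tendsto.congr' ?_ htend
        filter_upwards [self_mem_nhdsWithin] with t ht
        simp only [hR_def]
        rw [if_neg (by simpa using ht.2), slope_def_field, hG0]
        ring
      have hR0 : R 0 = m := by simp only [hR_def]; simp
      unfold ContinuousWithinAt
      rw [hR0]
      exact this
    · have hev : ∀ᶠ t in nhds s, t ≠ 0 := by
        have : {(0:ℝ)}ᶜ ∈ nhds s := by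
          apply IsOpen.mem_nhds isOpen_compl_singleton
          simpa using h0
        filter_upwards [this] with t ht
        simpa using ht
      have hca : ContinuousAt (fun t => G t / t) s :=
        (hGcont.continuousAt).div continuousAt_id h0
      have : ContinuousAt R s := by
        apply hca.congr
        filter_upwards [hev] with t ht
        simp only [hR_def]
        simp [if_neg ht]
      exact this.continuousWithinAt
  have hΨcont : ContinuousOn Ψ (Set.Icc (-u) 0) := by
    apply ContinuousOn.sub
    · exact (continuous_const.mul hGcont).continuousOn
    · exact hRcont
  -- differentiability and derivative on Ioo
  have hΦderiv : ∀ s ∈ Set.Ioo (-u) (0:ℝ),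
      HasDerivAt (fun t => c0 * G t - G t / t)
        (c0 * (Fd s / F s) - ((Fd s / F s) * s - G s * 1) / s^2) s := by
    intro s hs
    have hs0 : s ≠ 0 := ne_of_lt hs.2
    exact ((hG s).const_mul c0).sub (((hG s)).div (hasDerivAt_id s) hs0)
  have hΨev : ∀ s ∈ Set.Ioo (-u) (0:ℝ), Ψ =ᶠ[nhds s] (fun t => c0 * G t - G t / t) := by
    intro s hs
    have hs0 : s ≠ 0 := ne_of_lt hs.2
    have hev : ∀ᶠ t in nhds s, t ≠ 0 := by
      have : {(0:ℝ)}ᶜ ∈ nhds s := by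
        apply IsOpen.mem_nhds isOpen_compl_singleton
        simpa using hs0
      filter_upwards [this] with t ht
      simpa using ht
    filter_upwards [hev] with t ht
    simp only [hΨ_def, hR_def]
    simp [if_neg ht]
  have hΨdiff : DifferentiableOn ℝ Ψ (interior (Set.Icc (-u) 0)) := by
    rw [interior_Icc]
    intro s hs
    have := ((hΦderiv s hs).differentiableAt.congr_of_eventuallyEq (hΨev s hs))
    exact this.differentiableWithinAt
  have hΨd : ∀ s ∈ interior (Set.Icc (-u) 0), 0 ≤ deriv Ψ s := by
    rw [interior_Icc]
    intro s hs
    have hd : deriv Ψ s = c0 * (Fd s / F s) - ((Fd s / F s) * s - G s * 1) / s^2 := by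
      rw [Filter.EventuallyEq.deriv_eq (hΨev s hs)]
      exact (hΦderiv s hs).deriv
    rw [hd]
    have hs0 : s ≠ 0 := ne_of_lt hs.2
    have hs2 : 0 < s^2 := by positivity
    have hFs := hFpos s
    have e : c0 * (Fd s / F s) - ((Fd s / F s) * s - G s * 1) / s^2
        = (c0 * s^2 * Fd s - (s * Fd s - F s * G s)) / (F s * s^2) := by
      field_simp
    rw [e]
    apply div_nonneg
    · have := key2 s (le_of_lt hs.1) (le_of_lt hs.2)
      linarith
    · positivity
  have hmono := monotoneOn_of_deriv_nonneg (convex_Icc (-u) 0) hΨcont hΨdiff hΨd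
  have hle := hmono (Set.mem_Icc.2 ⟨le_refl _, by linarith⟩)
    (Set.mem_Icc.2 ⟨by linarith, le_refl _⟩) (by linarith)
  -- hle : Ψ (-u) ≤ Ψ 0
  have hΨ0 : Ψ 0 = -m := by
    simp only [hΨ_def, hR_def]
    rw [hG0]
    simp
  have hΨu : Ψ (-u) = c0 * G (-u) - G (-u) / (-u) := by
    simp only [hΨ_def, hR_def]
    rw [if_neg (by linarith : (-u:ℝ) ≠ 0)]
  rw [hΨ0, hΨu] at hle
  -- conclude
  have hgoal : G (-u) * (1 + c0 * u) ≤ -u * m := by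
    have hu' : (0:ℝ) < u := hu0
    have h2 : c0 * G (-u) * u + G (-u) ≤ -m * u := by
      have := mul_le_mul_of_nonneg_right hle hu'.le
      have hune : u ≠ 0 := ne_of_gt hu0
      have e2 : (c0 * G (-u) - G (-u) / (-u)) * u = c0 * G (-u) * u + G (-u) := by
        rw [div_neg, sub_neg_eq_add, add_mul, div_mul_cancel₀ _ hune]
      rw [e2] at this
      exact this
    nlinarith [h2]
  have hGu : G (-u) = Real.log (∑ x, W x * Real.exp (-u * g x)) := by
    simp only [hG_def, hF_def]
  rw [← hGu]
  exact hgoal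

lemma transfer {Ω : Type*} [MeasurableSpace Ω] (μ : Measure Ω) [IsProbabilityMeasure μ]
    {n : ℕ} (X : Fin n → Ω → Bool) (hXm : ∀ i, Measurable (X i))
    (hXind : iIndepFun X μ)
    (G : (Fin n → Bool) → ℝ) :
    Integrable (fun ω => G (fun i => X i ω)) μ ∧
      ∫ ω, G (fun i => X i ω) ∂μ
        = ∑ x : Fin n → Bool, (∏ i, (μ ((X i) ⁻¹' {x i})).toReal) * G x := by
  classical
  have hA : ∀ x : Fin n → Bool, MeasurableSet (⋂ i, X i ⁻¹' {x i}) :=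
    fun x => MeasurableSet.iInter fun i => hXm i (measurableSet_singleton _)
  have hfeq : (fun ω => G (fun i => X i ω))
      = fun ω => ∑ x : Fin n → Bool,
          Set.indicator (⋂ i, X i ⁻¹' {x i}) (fun _ => G x) ω := by
    funext ω
    rw [Finset.sum_eq_single_of_mem (fun i => X i ω) (mem_univ _) ?h0]
    · rw [Set.indicator_of_mem]
      simp [Set.mem_iInter]
    case h0 =>
      intro x _ hx
      rw [Set.indicator_of_notMem]
      intro hmem
      apply hx
      funext i
      exact (Set.mem_iInter.1 hmem i).symm
  have hmeas : ∀ x : Fin n → Bool,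
      μ (⋂ i, X i ⁻¹' {x i}) = ∏ i, μ (X i ⁻¹' {x i}) := by
    intro x
    exact hXind.meas_iInter (fun i => ⟨{x i}, measurableSet_singleton _, rfl⟩)
  constructor
  · rw [hfeq]
    exact integrable_finset_sum _ (fun x _ => (integrable_const (G x)).indicator (hA x))
  · rw [hfeq,
      integral_finset_sum univ (fun x _ => (integrable_const (G x)).indicator (hA x))]
    apply Finset.sum_congr rfl
    intro x _
    rw [integral_indicator_const (G x) (hA x), measureReal_def, hmeas x, ENNReal.toReal_prod, smul_eq_mul]


end NMSubAux

open NMSubAux in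
/-- Lower tail for non-negative (not necessarily monotone) submodular set functions
with marginal values in `[−1,1]`, evaluated on independent `{0,1}`-valued random
variables: `Pr[Z ≤ (1−δ) E Z] ≤ e^{−δ² E Z / 4}` for every `0 < δ ≤ 1`. -/
theorem nonmonotone_submodular_lower_tail
    {Ω : Type*} [MeasurableSpace Ω] (μ : Measure Ω) [IsProbabilityMeasure μ]
    {n : ℕ} (X : Fin n → Ω → Bool) (hXm : ∀ i, Measurable (X i))
    (hXind : iIndepFun X μ)
    (f : Finset (Fin n) → ℝ)
    (hnonneg : ∀ A : Finset (Fin n), 0 ≤ f A)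
    (hsubmod : ∀ A B : Finset (Fin n), f (A ∪ B) + f (A ∩ B) ≤ f A + f B)
    (hmarg : ∀ (A : Finset (Fin n)) (j : Fin n), |f (insert j A) - f A| ≤ 1)
    (Z : Ω → ℝ) (hZ : ∀ ω, Z ω = f (univ.filter fun i => X i ω = true))
    (δ : ℝ) (hδ : 0 < δ) (hδ' : δ ≤ 1) :
    (μ {ω | Z ω ≤ (1 - δ) * (∫ ω', Z ω' ∂μ)}).toReal
      ≤ Real.exp (-δ ^ 2 * (∫ ω', Z ω' ∂μ) / 4) := by
  classical
  obtain ⟨u, rfl⟩ : ∃ u, δ = 2*u := ⟨δ/2, by ring⟩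
  have hu0 : 0 < u := by linarith
  have hu1 : u ≤ 1/2 := by linarith
  -- weights
  set ν : Fin n → Bool → ℝ := fun i b => (μ ((X i) ⁻¹' {b})).toReal with hν_def
  have hν0 : ∀ i b, 0 ≤ ν i b := fun i b => ENNReal.toReal_nonneg
  have hν1 : ∀ i, ν i true + ν i false = 1 := by
    intro i
    have hcompl : X i ⁻¹' {false} = (X i ⁻¹' {true})ᶜ := by
      ext ω
      simp only [Set.mem_preimage, Set.mem_singleton_iff, Set.mem_compl_iff]
      cases h : X i ω <;> simp
    simp only [hν_def]
    rw [hcompl, ← ENNReal.toReal_add (measure_ne_top μ _) (measure_ne_top μ _),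
      measure_add_measure_compl (hXm i (measurableSet_singleton _))]
    simp
  set g : (Fin n → Bool) → ℝ := fun x => f (toSet x) with hg_def
  have hg0 : ∀ x, 0 ≤ g x := fun x => hnonneg _
  have hgmin_eq : ∀ (x : Fin n → Bool) (j : Fin n),
      gmin g j x = min (f (insert j (toSet x))) (f ((toSet x).erase j)) := by
    intro x j
    unfold gmin
    simp only [hg_def]
    rw [toSet_update_true, toSet_update_false]
  have hg1 : ∀ (x : Fin n → Bool) (j : Fin n), g x - gmin g j x ≤ 1 := by
    intro x j
    rw [hgmin_eq]
    exact term_le_one f hmarg (toSet x) j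
  -- Z and mean
  have hZeq : ∀ ω, Z ω = g (fun i => X i ω) := by
    intro ω
    rw [hZ]
    simp only [hg_def]
    rfl
  obtain ⟨hint_g, hI_g⟩ := transfer μ X hXm hXind g
  have hm' : (∫ ω', Z ω' ∂μ) = ∑ x, W ν x * g x := by
    rw [integral_congr_ae (Filter.Eventually.of_forall hZeq), hI_g]
    exact Finset.sum_congr rfl fun x _ => rfl
  rw [hm']
  have hm0' : 0 ≤ ∑ x, W ν x * g x :=
    Finset.sum_nonneg fun x _ => mul_nonneg (W_nonneg ν hν0 x) (hg0 x)
  obtain ⟨m, hm_def⟩ : ∃ m, (∑ x, W ν x * g x) = m := ⟨_, rfl⟩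
  rw [hm_def]
  have hm0 : 0 ≤ m := hm_def ▸ hm0'
  -- key entropy inequality
  have hkey : ∀ s, -u ≤ s → s ≤ 0 →
      (∑ x, W ν x * (s * g x * Real.exp (s * g x)))
        - (∑ x, W ν x * Real.exp (s * g x)) * Real.log (∑ x, W ν x * Real.exp (s * g x))
      ≤ 2 * φ (-s) * (∑ x, W ν x * (g x * Real.exp (s * g x))) := by
    intro s _ hs2
    refine le_trans (ent_tensor s hs2 n ν hν0 hν1 g hg1) ?_
    have hD : ∀ x, (∑ j, (g x - gmin g j x)) ≤ 2 * g x := by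
      intro x
      calc ∑ j, (g x - gmin g j x)
          = ∑ j, (f (toSet x) - min (f (insert j (toSet x))) (f ((toSet x).erase j))) :=
            Finset.sum_congr rfl fun j _ => by rw [hgmin_eq]
      _ ≤ 2 * f (toSet x) := submod_selfbound f hnonneg hsubmod (toSet x)
    calc φ (-s) * ∑ x, W ν x * (Real.exp (s * g x) * (∑ j, (g x - gmin g j x)))
        ≤ φ (-s) * ∑ x, W ν x * (Real.exp (s * g x) * (2 * g x)) := by
          apply mul_le_mul_of_nonneg_left _ φ_nonneg
          apply Finset.sum_le_sum
          intro x _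
          apply mul_le_mul_of_nonneg_left _ (W_nonneg ν hν0 x)
          exact mul_le_mul_of_nonneg_left (hD x) (Real.exp_pos _).le
      _ = 2 * φ (-s) * ∑ x, W ν x * (g x * Real.exp (s * g x)) := by
          rw [Finset.mul_sum, Finset.mul_sum]
          apply Finset.sum_congr rfl
          intro x _
          ring
  have hherbst := herbst (W ν) g (W_nonneg ν hν0) (W_sum_one ν hν1) hg0 u hu0 hu1 hkey
  rw [hm_def] at hherbst
  -- Chernoff step
  set L := Real.log (∑ x, W ν x * Real.exp (-u * g x)) with hL_def
  obtain ⟨hint_Y, hI_Y⟩ := transfer μ X hXm hXind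
    (fun x => Real.exp (u * (1 - 2*u) * m) * Real.exp (-u * g x))
  have hsubset : {ω | Z ω ≤ (1 - 2*u) * m}
      ⊆ {ω | 1 ≤ Real.exp (u * (1 - 2*u) * m) * Real.exp (-u * g (fun i => X i ω))} := by
    intro ω hω
    simp only [Set.mem_setOf_eq] at hω ⊢
    rw [← Real.exp_add, Real.one_le_exp_iff]
    rw [hZeq ω] at hω
    nlinarith [hω, hu0]
  have hmark := mul_meas_ge_le_integral_of_nonneg
    (f := fun ω => Real.exp (u * (1 - 2*u) * m) * Real.exp (-u * g (fun i => X i ω)))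
    (Filter.Eventually.of_forall fun ω => by positivity) hint_Y 1
  rw [one_mul] at hmark
  have hPr : (μ {ω | Z ω ≤ (1 - 2*u) * m}).toReal
      ≤ Real.exp (u * (1 - 2*u) * m) * ∑ x, W ν x * Real.exp (-u * g x) := by
    calc (μ {ω | Z ω ≤ (1 - 2*u) * m}).toReal
        ≤ (μ {ω | 1 ≤ Real.exp (u * (1 - 2*u) * m)
            * Real.exp (-u * g (fun i => X i ω))}).toReal :=
          ENNReal.toReal_mono (measure_ne_top μ _) (measure_mono hsubset)
      _ ≤ ∫ ω, Real.exp (u * (1 - 2*u) * m) * Real.exp (-u * g (fun i => X i ω)) ∂μ := hmark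
      _ = ∑ x, W ν x * (Real.exp (u * (1 - 2*u) * m) * Real.exp (-u * g x)) := hI_Y
      _ = Real.exp (u * (1 - 2*u) * m) * ∑ x, W ν x * Real.exp (-u * g x) := by
          rw [Finset.mul_sum]
          apply Finset.sum_congr rfl
          intro x _
          ring
  have hFpos : 0 < ∑ x, W ν x * Real.exp (-u * g x) :=
    sum_wexp_pos (W ν) (W_nonneg ν hν0) (W_sum_one ν hν1) _
  have hexp : Real.exp (u * (1 - 2*u) * m) * ∑ x, W ν x * Real.exp (-u * g x)
      = Real.exp (u * (1 - 2*u) * m + L) := by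
    rw [Real.exp_add, hL_def, Real.exp_log hFpos]
  have hfinal : u * (1 - 2*u) * m + L ≤ -(2*u) ^ 2 * m / 4 := by
    have hc : (1 - u) * (1 + (1 + 4*u/9) * u) ≤ 1 := by nlinarith [sq_nonneg u, hu0.le]
    have hK : (0:ℝ) < 1 + (1 + 4*u/9) * u := by nlinarith
    have h6 := mul_le_mul_of_nonneg_left hc (mul_nonneg hu0.le hm0)
    nlinarith [hherbst, h6, hK, mul_pos hu0 hu0]
  calc (μ {ω | Z ω ≤ (1 - 2*u) * m}).toReal
      ≤ Real.exp (u * (1 - 2*u) * m) * ∑ x, W ν x * Real.exp (-u * g x) := hPr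
    _ = Real.exp (u * (1 - 2*u) * m + L) := hexp
    _ ≤ Real.exp (-(2*u) ^ 2 * m / 4) := Real.exp_le_exp.2 hfinal
end

section
/- Let n = m² for an integer m ≥ 3 and define f : 2^[n] → ℝ by f(S) = |S| if |S| < m; f(S) = m if m ≤ |S| ≤ (m² − m)/2; f(S) = m + |S| − (m² − m)/2 if (m² − m)/2 < |S| < (m² + m)/2; and f(S) = 2m if |S| ≥ (m² + m)/2. Then f is monotone with all marginal values in [0,1], and f is subadditive: f(A ∪ B) ≤ f(A) + f(B) for all A, B ⊆ [n]. -/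
open Finset

/-- Auxiliary step function: `min k m + (min k b - a)`. -/
def gAux (m a b k : ℕ) : ℕ := min k m + (min k b - a)

/-- The paper's counterexample: for `n = m²`, `m ≥ 3`, the set function with
`f(S) = |S|` for `|S| < m`, `f(S) = m` for `m ≤ |S| ≤ (m² − m)/2`,
`f(S) = m + |S| − (m² − m)/2` for `(m² − m)/2 < |S| < (m² + m)/2`, and
`f(S) = 2m` for `|S| ≥ (m² + m)/2`, is monotone with marginal values in `[0,1]`
and subadditive. -/
theorem counterexample_monotone_lipschitz_subadditive
    (m : ℕ) (hm : 3 ≤ m) (n : ℕ) (hn : n = m ^ 2)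
    (f : Finset (Fin n) → ℝ)
    (hf1 : ∀ S : Finset (Fin n), S.card < m → f S = S.card)
    (hf2 : ∀ S : Finset (Fin n), m ≤ S.card → S.card ≤ (m ^ 2 - m) / 2 → f S = m)
    (hf3 : ∀ S : Finset (Fin n), (m ^ 2 - m) / 2 < S.card →
      S.card < (m ^ 2 + m) / 2 →
      f S = (m : ℝ) + S.card - (((m ^ 2 - m) / 2 : ℕ) : ℝ))
    (hf4 : ∀ S : Finset (Fin n), (m ^ 2 + m) / 2 ≤ S.card → f S = 2 * m) :
    (∀ A B : Finset (Fin n), A ⊆ B → f A ≤ f B) ∧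
    (∀ (A : Finset (Fin n)) (j : Fin n),
      0 ≤ f (insert j A) - f A ∧ f (insert j A) - f A ≤ 1) ∧
    (∀ A B : Finset (Fin n), f (A ∪ B) ≤ f A + f B) := by
  set a := (m ^ 2 - m) / 2 with hadef
  set b := (m ^ 2 + m) / 2 with hbdef
  have hsq : m ^ 2 = m * m := sq m
  have hmm : 3 * m ≤ m * m := Nat.mul_le_mul_right m hm
  have he : Even (m ^ 2 - m) := by
    rw [hsq, Nat.even_sub (Nat.le_mul_of_pos_left m (by omega)), Nat.even_mul]
    tauto
  have hd : 2 ∣ m * m - m := by rw [← hsq]; exact he.two_dvd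
  have ham : m ≤ a := by rw [hadef, hsq]; omega
  have hb : b = a + m := by rw [hadef, hbdef, hsq]; omega
  -- core facts about gAux
  have gmono : ∀ x y : ℕ, x ≤ y → gAux m a b x ≤ gAux m a b y := by
    intro x y h; unfold gAux; omega
  have glip : ∀ x : ℕ, gAux m a b (x + 1) ≤ gAux m a b x + 1 := by
    intro x; unfold gAux; omega
  have gsub : ∀ x y : ℕ, gAux m a b (x + y) ≤ gAux m a b x + gAux m a b y := by
    intro x y; unfold gAux; omega
  -- f agrees with gAux of the cardinality
  have hg : ∀ S : Finset (Fin n), f S = (gAux m a b S.card : ℝ) := by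
    intro S
    rcases lt_or_ge S.card m with h1 | h1
    · rw [hf1 S h1]
      have : gAux m a b S.card = S.card := by unfold gAux; omega
      rw [this]
    · rcases le_or_gt S.card a with h2 | h2
      · rw [hf2 S h1 h2]
        have : gAux m a b S.card = m := by unfold gAux; omega
        rw [this]
      · rcases lt_or_ge S.card b with h3 | h3
        · rw [hf3 S h2 h3]
          have : gAux m a b S.card = m + (S.card - a) := by unfold gAux; omega
          rw [this, Nat.cast_add, Nat.cast_sub (le_of_lt h2)]
          ring
        · rw [hf4 S h3]
          have : gAux m a b S.card = 2 * m := by unfold gAux; omega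
          rw [this, Nat.cast_mul, Nat.cast_ofNat]
  refine ⟨?_, ?_, ?_⟩
  · intro A B hAB
    rw [hg A, hg B]
    exact_mod_cast gmono _ _ (card_le_card hAB)
  · intro A j
    have hc1 : A.card ≤ (insert j A).card := card_le_card (subset_insert j A)
    have hc2 : (insert j A).card ≤ A.card + 1 := card_insert_le j A
    rw [hg (insert j A), hg A]
    constructor
    · rw [sub_nonneg]
      exact_mod_cast gmono _ _ hc1
    · rw [sub_le_iff_le_add]
      have : gAux m a b (insert j A).card ≤ gAux m a b A.card + 1 :=
        le_trans (gmono _ _ hc2) (glip A.card)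
      calc (gAux m a b (insert j A).card : ℝ) ≤ (gAux m a b A.card + 1 : ℕ) := by
            exact_mod_cast this
        _ = 1 + (gAux m a b A.card : ℝ) := by push_cast; ring
  · intro A B
    rw [hg (A ∪ B), hg A, hg B]
    have h1 : gAux m a b (A ∪ B).card ≤ gAux m a b (A.card + B.card) :=
      gmono _ _ (card_union_le A B)
    have h2 := gsub A.card B.card
    exact_mod_cast le_trans h1 h2
end

section
/- Let n = m² for an even integer m ≥ 4 and let f : 2^[n] → ℝ be defined by f(S) = |S| if |S| < m; f(S) = m if m ≤ |S| ≤ (m² − m)/2; f(S) = m + |S| − (m² − m)/2 if (m² − m)/2 < |S| < (m² + m)/2; and f(S) = 2m if |S| ≥ (m² + m)/2. Then for any S ⊆ [n] with |S| = n/2 one has f(S) = 3m/2 and f(S) − f(S \ {i}) = 1 for every i ∈ S, so Σ_{i ∈ S} (f(S) − f(S \ {i})) = n/2. Consequently, for any fixed a, b ≥ 0, if n/2 > (3a/2)·m + b then f is not (a,b)-self-bounding. -/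
open Finset

/-- For `a, b ≥ 0`, a set function `f` on `[n]` is `(a,b)`-self-bounding if there
are functions `g i` not depending on the element `i` (i.e. `g i S = g i (S \ {i})`)
such that `0 ≤ f(S) − g i S ≤ 1` for all `S, i` and
`∑ᵢ (f(S) − g i S) ≤ a f(S) + b` for all `S`. -/
def ABSelfBoundingSet {n : ℕ} (a b : ℝ) (f : Finset (Fin n) → ℝ) : Prop :=
  ∃ g : Fin n → Finset (Fin n) → ℝ,
    (∀ (i : Fin n) (S : Finset (Fin n)), g i S = g i (S.erase i)) ∧
    (∀ (S : Finset (Fin n)) (i : Fin n), 0 ≤ f S - g i S ∧ f S - g i S ≤ 1) ∧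
    (∀ S : Finset (Fin n), ∑ i, (f S - g i S) ≤ a * f S + b)

/-- The paper's subadditive counterexample (for `n = m²`, `m ≥ 4` even) is not
`(a,b)`-self-bounding: for any `S` of cardinality `n/2` one has `f(S) = 3m/2` and
`f(S) − f(S \ {i}) = 1` for every `i ∈ S`, so
`∑_{i ∈ S} (f(S) − f(S \ {i})) = n/2`; hence whenever `n/2 > (3a/2)·m + b` with
`a, b ≥ 0`, `f` is not `(a,b)`-self-bounding. -/
theorem counterexample_not_self_bounding
    (m : ℕ) (hm : 4 ≤ m) (hmeven : Even m) (n : ℕ) (hn : n = m ^ 2)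
    (f : Finset (Fin n) → ℝ)
    (hf1 : ∀ S : Finset (Fin n), S.card < m → f S = S.card)
    (hf2 : ∀ S : Finset (Fin n), m ≤ S.card → S.card ≤ (m ^ 2 - m) / 2 → f S = m)
    (hf3 : ∀ S : Finset (Fin n), (m ^ 2 - m) / 2 < S.card →
      S.card < (m ^ 2 + m) / 2 →
      f S = (m : ℝ) + S.card - (((m ^ 2 - m) / 2 : ℕ) : ℝ))
    (hf4 : ∀ S : Finset (Fin n), (m ^ 2 + m) / 2 ≤ S.card → f S = 2 * m) :
    (∀ S : Finset (Fin n), S.card = n / 2 →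
      f S = 3 * m / 2 ∧
      (∀ i ∈ S, f S - f (S.erase i) = 1) ∧
      ∑ i ∈ S, (f S - f (S.erase i)) = ((n / 2 : ℕ) : ℝ)) ∧
    (∀ a b : ℝ, 0 ≤ a → 0 ≤ b →
      (3 * a / 2) * m + b < ((n / 2 : ℕ) : ℝ) → ¬ ABSelfBoundingSet a b f) := by
  obtain ⟨k, hk⟩ := hmeven
  have hk2 : 2 ≤ k := by omega
  obtain ⟨p, hp⟩ : ∃ p, p = k * k := ⟨k * k, rfl⟩
  have hpk : k ≤ p ∧ 4 ≤ p := by constructor <;> nlinarith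
  have hm2 : m ^ 2 = 4 * p := by rw [hp]; subst hk; ring
  have hlo : (m ^ 2 - m) / 2 = 2 * (p) - k := by omega
  have hhi : (m ^ 2 + m) / 2 = 2 * (p) + k := by omega
  have hn2 : n / 2 = 2 * (p) := by omega
  -- main facts about f at sets of size n/2
  have key : ∀ S : Finset (Fin n), S.card = n / 2 →
      f S = 3 * m / 2 ∧ (∀ i ∈ S, f S - f (S.erase i) = 1) := by
    intro S hS
    have hfS : f S = 3 * m / 2 := by
      have h1 : (m ^ 2 - m) / 2 < S.card := by omega
      have h2 : S.card < (m ^ 2 + m) / 2 := by omega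
      rw [hf3 S h1 h2, hS, hn2, hlo]
      have : (((2 * (p) - k : ℕ)) : ℝ) = 2 * (p) - k := by
        push_cast [Nat.cast_sub (by nlinarith : k ≤ 2 * (p))]; ring
      rw [this, hp]
      subst hk; push_cast; ring
    refine ⟨hfS, fun i hi => ?_⟩
    have hce : (S.erase i).card = n / 2 - 1 := by rw [card_erase_of_mem hi, hS]
    have h1 : (m ^ 2 - m) / 2 < (S.erase i).card := by omega
    have h2 : (S.erase i).card < (m ^ 2 + m) / 2 := by omega
    have hfe : f (S.erase i) = 3 * m / 2 - 1 := by
      rw [hf3 _ h1 h2, hce, hn2, hlo]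
      have e1 : (((2 * (p) - k : ℕ)) : ℝ) = 2 * (p) - k := by
        push_cast [Nat.cast_sub (by nlinarith : k ≤ 2 * (p))]; ring
      have e2 : (((2 * (p) - 1 : ℕ)) : ℝ) = 2 * (p) - 1 := by
        push_cast [Nat.cast_sub (by nlinarith : 1 ≤ 2 * (p))]; ring
      rw [e1, e2, hp]
      subst hk; push_cast; ring
    rw [hfS, hfe]; ring
  constructor
  · intro S hS
    obtain ⟨h1, h2⟩ := key S hS
    refine ⟨h1, h2, ?_⟩
    rw [Finset.sum_congr rfl h2, Finset.sum_const, hS]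
    simp
  · rintro a b ha hb hab ⟨g, hg1, hg2, hg3⟩
    -- choose a set of size n/2
    obtain ⟨S, -, hS⟩ := Finset.exists_subset_card_eq (s := (univ : Finset (Fin n)))
      (n := n / 2) (by simp; omega)
    obtain ⟨hfS, hdiff⟩ := key S hS
    -- each term for i ∈ S is at least 1
    have hterm : ∀ i ∈ S, (1 : ℝ) ≤ f S - g i S := by
      intro i hi
      have h1 : g i S = g i (S.erase i) := hg1 i S
      have h2 : 0 ≤ f (S.erase i) - g i (S.erase i) := (hg2 (S.erase i) i).1
      have h3 : f S - f (S.erase i) = 1 := hdiff i hi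
      linarith [h1 ▸ h2]
    have hlow : ((n / 2 : ℕ) : ℝ) ≤ ∑ i ∈ S, (f S - g i S) := by
      calc ((n / 2 : ℕ) : ℝ) = ∑ _i ∈ S, (1 : ℝ) := by rw [Finset.sum_const, hS]; simp
        _ ≤ ∑ i ∈ S, (f S - g i S) := Finset.sum_le_sum hterm
    have hup : ∑ i ∈ S, (f S - g i S) ≤ ∑ i, (f S - g i S) :=
      Finset.sum_le_sum_of_subset_of_nonneg (Finset.subset_univ S)
        (fun i _ _ => (hg2 S i).1)
    have := hg3 S
    have hq : a * f S + b = 3 * a / 2 * m + b := by rw [hfS]; ring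
    linarith [this, hup, hlow, hab, hq]
end

section
/- Let X_1,…,X_n ∈ {0,1} be independent random variables and let f : 2^[n] → ℝ be a non-negative subadditive set function with marginal values in [0,1], and set Z = f(X_1,…,X_n). If a is a median of Z (i.e. Pr[Z ≤ a] ≥ 1/2), then for every integer k with 1 ≤ k ≤ n, Pr[Z ≥ 3a + k] ≤ 2^{2−k}. -/
open MeasureTheory ProbabilityTheory Finset

namespace SchechtmanAux




/-- number of coordinates where `x` is true but both `u,v` are false. -/
def cnt {n : ℕ} (x u v : Fin n → Bool) : ℕ :=
  (univ.filter fun i => x i = true ∧ u i = false ∧ v i = false).card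

/-- min of `cnt x u v` over `u ∈ C`, `v ∈ D`. -/
noncomputable def hh {n : ℕ} (C D : Finset (Fin n → Bool)) (x : Fin n → Bool) : ℕ :=
  sInf {m | ∃ u ∈ C, ∃ v ∈ D, cnt x u v = m}

lemma hh_le {n : ℕ} {C D : Finset (Fin n → Bool)} {u v : Fin n → Bool} (x : Fin n → Bool)
    (hu : u ∈ C) (hv : v ∈ D) : hh C D x ≤ cnt x u v :=
  Nat.sInf_le ⟨u, hu, v, hv, rfl⟩

lemma hh_exists {n : ℕ} {C D : Finset (Fin n → Bool)} (hC : C.Nonempty) (hD : D.Nonempty)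
    (x : Fin n → Bool) : ∃ u ∈ C, ∃ v ∈ D, cnt x u v = hh C D x := by
  obtain ⟨u, hu⟩ := hC; obtain ⟨v, hv⟩ := hD
  have hne : {m | ∃ u ∈ C, ∃ v ∈ D, cnt x u v = m}.Nonempty := ⟨cnt x u v, u, hu, v, hv, rfl⟩
  exact Nat.sInf_mem hne

noncomputable def wt {n : ℕ} (p : Fin n → Bool → ℝ) (x : Fin n → Bool) : ℝ := ∏ i, p i (x i)

lemma wt_nonneg {n : ℕ} {p : Fin n → Bool → ℝ} (hp : ∀ i b, 0 ≤ p i b) (x : Fin n → Bool) :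
    0 ≤ wt p x := Finset.prod_nonneg fun i _ => hp i (x i)

noncomputable def TS {n : ℕ} (p : Fin n → Bool → ℝ) (C D : Finset (Fin n → Bool)) : ℝ :=
  ∑ x : Fin n → Bool, wt p x * 2 ^ hh C D x

lemma TS_nonneg {n : ℕ} {p : Fin n → Bool → ℝ} (hp : ∀ i b, 0 ≤ p i b)
    (C D : Finset (Fin n → Bool)) : 0 ≤ TS p C D :=
  Finset.sum_nonneg fun x _ => mul_nonneg (wt_nonneg hp x) (by positivity)

def Down {n : ℕ} (C : Finset (Fin n → Bool)) : Prop :=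
  ∀ x ∈ C, ∀ y : Fin n → Bool, (∀ i, y i = true → x i = true) → y ∈ C

noncomputable def sect {n : ℕ} (b : Bool) (C : Finset (Fin (n+1) → Bool)) :
    Finset (Fin n → Bool) :=
  univ.filter fun y => Fin.cons b y ∈ C

lemma sect_mem {n : ℕ} {b : Bool} {C : Finset (Fin (n+1) → Bool)} {y : Fin n → Bool} :
    y ∈ sect b C ↔ Fin.cons b y ∈ C := by simp [sect]

lemma sum_succ {n : ℕ} (F : (Fin (n+1) → Bool) → ℝ) :
    ∑ x : Fin (n+1) → Bool, F x
      = (∑ y : Fin n → Bool, F (Fin.cons false y)) + ∑ y : Fin n → Bool, F (Fin.cons true y) := by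
  rw [← ((Fin.consEquiv fun _ => Bool).sum_comp F)]
  rw [Fintype.sum_prod_type]
  rw [Fintype.sum_bool]
  simp [Fin.consEquiv, add_comm]

lemma wt_cons {n : ℕ} (p : Fin (n+1) → Bool → ℝ) (b : Bool) (y : Fin n → Bool) :
    wt p (Fin.cons b y) = p 0 b * wt (fun i => p i.succ) y := by
  simp [wt, Fin.prod_univ_succ]

lemma cnt_cons {n : ℕ} (b c d : Bool) (y u v : Fin n → Bool) :
    cnt (Fin.cons b y) (Fin.cons c u) (Fin.cons d v)
      = (if b = true ∧ c = false ∧ d = false then 1 else 0) + cnt y u v := by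
  simp only [cnt, card_filter]
  rw [Fin.sum_univ_succ]
  simp




lemma sect_down {n : ℕ} {C : Finset (Fin (n+1) → Bool)} (hd : Down C) (b : Bool) :
    Down (sect b C) := by
  intro y hy y' hle
  rw [sect_mem] at *
  refine hd _ hy _ ?_
  intro i hi
  induction i using Fin.cases with
  | zero => simpa using hi
  | succ j => simp only [Fin.cons_succ] at hi ⊢; exact hle j hi

lemma sect_false_nonempty {n : ℕ} {C : Finset (Fin (n+1) → Bool)} (hC : C.Nonempty)
    (hd : Down C) : (sect false C).Nonempty := by
  obtain ⟨x, hx⟩ := hC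
  refine ⟨fun _ => false, sect_mem.2 (hd x hx _ ?_)⟩
  intro i hi
  exfalso
  induction i using Fin.cases with
  | zero => simp at hi
  | succ j => simp at hi

lemma sect_subset {n : ℕ} {C : Finset (Fin (n+1) → Bool)} (hd : Down C) :
    sect true C ⊆ sect false C := by
  intro y hy
  rw [sect_mem] at *
  refine hd _ hy _ ?_
  intro i hi
  induction i using Fin.cases with
  | zero => simp at hi
  | succ j => simpa using hi

lemma hh_cons_false {n : ℕ} {C D : Finset (Fin (n+1) → Bool)} (y : Fin n → Bool)
    (h1 : (sect false C).Nonempty) (h2 : (sect false D).Nonempty) :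
    hh C D (Fin.cons false y) ≤ hh (sect false C) (sect false D) y := by
  obtain ⟨u, hu, v, hv, he⟩ := hh_exists h1 h2 y
  have h := hh_le (Fin.cons false y) (sect_mem.1 hu) (sect_mem.1 hv)
  rwa [cnt_cons, if_neg (by simp), zero_add, he] at h

lemma hh_cons_true_left {n : ℕ} {C D : Finset (Fin (n+1) → Bool)} (y : Fin n → Bool)
    (h1 : (sect true C).Nonempty) (h2 : (sect false D).Nonempty) :
    hh C D (Fin.cons true y) ≤ hh (sect true C) (sect false D) y := by
  obtain ⟨u, hu, v, hv, he⟩ := hh_exists h1 h2 y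
  have h := hh_le (Fin.cons true y) (sect_mem.1 hu) (sect_mem.1 hv)
  rwa [cnt_cons, if_neg (by simp), zero_add, he] at h

lemma hh_cons_true_right {n : ℕ} {C D : Finset (Fin (n+1) → Bool)} (y : Fin n → Bool)
    (h1 : (sect false C).Nonempty) (h2 : (sect true D).Nonempty) :
    hh C D (Fin.cons true y) ≤ hh (sect false C) (sect true D) y := by
  obtain ⟨u, hu, v, hv, he⟩ := hh_exists h1 h2 y
  have h := hh_le (Fin.cons true y) (sect_mem.1 hu) (sect_mem.1 hv)
  rwa [cnt_cons, if_neg (by simp), zero_add, he] at h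

lemma hh_cons_true_both {n : ℕ} {C D : Finset (Fin (n+1) → Bool)} (y : Fin n → Bool)
    (h1 : (sect false C).Nonempty) (h2 : (sect false D).Nonempty) :
    hh C D (Fin.cons true y) ≤ hh (sect false C) (sect false D) y + 1 := by
  obtain ⟨u, hu, v, hv, he⟩ := hh_exists h1 h2 y
  have h := hh_le (Fin.cons true y) (sect_mem.1 hu) (sect_mem.1 hv)
  rw [cnt_cons, if_pos (by simp), he] at h
  omega


/-- cube inequality: for `ct ≤ cf ≤ 2ct`, `((1-t)ct + t cf)((1-t)cf + t ct)² ≤ cf² ct`. -/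
lemma cube (Pf Pt cf ct : ℝ) (hPf : 0 ≤ Pf) (hPt : 0 ≤ Pt) (hsum : Pf + Pt = 1)
    (hct : 0 ≤ ct) (h1 : ct ≤ cf) (h2 : cf ≤ 2 * ct) :
    (Pf * ct + Pt * cf) * (Pf * cf + Pt * ct) ^ 2 ≤ cf ^ 2 * ct := by
  have hPf' : Pf = 1 - Pt := by linarith
  subst hPf'
  have hA : 0 ≤ Pt * (cf - ct) := mul_nonneg hPt (by linarith)
  have hcf : 0 ≤ cf := le_trans hct h1
  nlinarith [mul_nonneg (mul_nonneg hA (by linarith : (0:ℝ) ≤ 2 * ct - cf)) hcf,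
    mul_nonneg (mul_nonneg hA hA) hcf,
    mul_nonneg (mul_nonneg hA hA) (mul_nonneg hPf (by linarith : (0:ℝ) ≤ cf - ct)),
    sq_nonneg (Pt * (cf - ct))]

/-- Case-B core: packaged so it can be reused with `C ↔ D` swapped. -/
lemma keyB (Pf Pt W cf ct df dt : ℝ) (hPf : 0 ≤ Pf) (hPt : 0 ≤ Pt) (hsum : Pf + Pt = 1)
    (hW : 0 ≤ W) (hcf : 0 < cf) (hdf : 0 < df) (hct : 0 < ct) (hdt : 0 ≤ dt)
    (hctcf : ct ≤ cf) (h2ct : cf ≤ 2 * ct) (hdtdf : dt ≤ df) (hBB : cf * dt ≤ ct * df)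
    (hWK : W * (cf * (ct * df)) ≤ Pf * ct + Pt * cf) :
    W * ((Pf * cf + Pt * ct) * (Pf * df + Pt * dt)) ≤ 1 := by
  set G := Pf * ct + Pt * cf with hG
  set M := (Pf * cf + Pt * ct) * (Pf * df + Pt * dt) with hM
  have hMnn : 0 ≤ M := by
    apply mul_nonneg <;> nlinarith [mul_nonneg hPf hcf.le, mul_nonneg hPt hct.le,
      mul_nonneg hPf hdf.le, mul_nonneg hPt hdt]
  have hK : (0:ℝ) < cf * (ct * df) := by positivity
  -- step 2 : G * M ≤ cf * (ct * df)
  have hstep2 : G * M ≤ cf * (ct * df) := by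
    have hcube := cube Pf Pt cf ct hPf hPt hsum hct.le hctcf h2ct
    have hd : (Pf * df + Pt * dt) * cf ≤ df * (Pf * cf + Pt * ct) := by nlinarith
    have hGnn : 0 ≤ G := by nlinarith [mul_nonneg hPf hct.le, mul_nonneg hPt hcf.le]
    have hfac : 0 ≤ Pf * cf + Pt * ct := by nlinarith [mul_nonneg hPf hcf.le, mul_nonneg hPt hct.le]
    have h5 : G * M * cf ≤ G * (Pf * cf + Pt * ct) * (df * (Pf * cf + Pt * ct)) := by
      have := mul_le_mul_of_nonneg_left hd (mul_nonneg hGnn hfac)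
      calc G * M * cf = G * (Pf * cf + Pt * ct) * ((Pf * df + Pt * dt) * cf) := by ring
        _ ≤ G * (Pf * cf + Pt * ct) * (df * (Pf * cf + Pt * ct)) := this
    have h6 : G * (Pf * cf + Pt * ct) * (df * (Pf * cf + Pt * ct))
        = df * (G * (Pf * cf + Pt * ct) ^ 2) := by ring
    have h7 : df * (G * (Pf * cf + Pt * ct) ^ 2) ≤ df * (cf ^ 2 * ct) :=
      mul_le_mul_of_nonneg_left hcube hdf.le
    have : G * M * cf ≤ df * (cf ^ 2 * ct) := by rw [h6] at h5; linarith
    have := le_of_mul_le_mul_right (by nlinarith : G * M * cf ≤ cf * (ct * df) * cf) hcf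
    exact this
  -- combine
  have hfinal : W * M * (cf * (ct * df)) ≤ cf * (ct * df) := by
    calc W * M * (cf * (ct * df)) = (W * (cf * (ct * df))) * M := by ring
      _ ≤ G * M := mul_le_mul_of_nonneg_right hWK hMnn
      _ ≤ cf * (ct * df) := hstep2
  nlinarith [hfinal, hK]



set_option maxHeartbeats 1000000 in
lemma key (Pf Pt S0 U0 U1 cf ct df dt : ℝ)
    (hPf : 0 ≤ Pf) (hPt : 0 ≤ Pt) (hsum : Pf + Pt = 1)
    (hU0 : 0 ≤ U0) (hU1 : 0 ≤ U1) (hS0 : 0 ≤ S0) (hU0S : U0 ≤ S0)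
    (hct : 0 ≤ ct) (hctcf : ct ≤ cf) (hdt : 0 ≤ dt) (hdtdf : dt ≤ df)
    (IH0 : S0 * (cf * df) ≤ 1) (hU1S0 : U1 ≤ 2 * S0)
    (h1 : 0 < ct → ∃ S1, 0 ≤ S1 ∧ U1 ≤ S1 ∧ S1 * (ct * df) ≤ 1)
    (h2 : 0 < dt → ∃ S2, 0 ≤ S2 ∧ U1 ≤ S2 ∧ S2 * (cf * dt) ≤ 1) :
    (Pf * U0 + Pt * U1) * ((Pf * cf + Pt * ct) * (Pf * df + Pt * dt)) ≤ 1 := by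
  have hcf0 : 0 ≤ cf := le_trans hct hctcf
  have hdf0 : 0 ≤ df := le_trans hdt hdtdf
  have hW : 0 ≤ Pf * U0 + Pt * U1 := by positivity
  rcases eq_or_lt_of_le hcf0 with hcf | hcf
  · have hct0 : ct = 0 := le_antisymm (hcf ▸ hctcf) hct
    rw [← hcf, hct0]
    simp [mul_nonneg, hW]
  rcases eq_or_lt_of_le hdf0 with hdf | hdf
  · have hdt0 : dt = 0 := le_antisymm (hdf ▸ hdtdf) hdt
    rw [← hdf, hdt0]
    simp [mul_nonneg, hW]
  -- now cf, df > 0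
  by_cases hA : 2 * ct ≤ cf ∧ 2 * dt ≤ df
  · -- case A
    obtain ⟨hA1, hA2⟩ := hA
    have f1 : Pf * U0 + Pt * U1 ≤ (Pf + 2 * Pt) * S0 := by
      nlinarith [mul_le_mul_of_nonneg_left hU0S hPf, mul_le_mul_of_nonneg_left hU1S0 hPt]
    have f2 : Pf * cf + Pt * ct ≤ (Pf + Pt / 2) * cf := by
      nlinarith [mul_le_mul_of_nonneg_left hA1 hPt]
    have f3 : Pf * df + Pt * dt ≤ (Pf + Pt / 2) * df := by
      nlinarith [mul_le_mul_of_nonneg_left hA2 hPt]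
    have hg2 : 0 ≤ Pf * cf + Pt * ct := by positivity
    have hg3 : 0 ≤ Pf * df + Pt * dt := by positivity
    have hc1 : 0 ≤ (Pf + 2 * Pt) * S0 := by positivity
    have hc2 : 0 ≤ (Pf + Pt / 2) * cf := by positivity
    calc (Pf * U0 + Pt * U1) * ((Pf * cf + Pt * ct) * (Pf * df + Pt * dt))
        ≤ ((Pf + 2 * Pt) * S0) * (((Pf + Pt / 2) * cf) * ((Pf + Pt / 2) * df)) := by
          apply mul_le_mul f1 (mul_le_mul f2 f3 hg3 hc2) (mul_nonneg hg2 hg3) hc1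
      _ = ((Pf + 2 * Pt) * (Pf + Pt / 2) ^ 2) * (S0 * (cf * df)) := by ring
      _ ≤ ((Pf + 2 * Pt) * (Pf + Pt / 2) ^ 2) * 1 := by
          apply mul_le_mul_of_nonneg_left IH0 (by positivity)
      _ ≤ 1 := by
          rw [mul_one]
          have hPfe : Pf = 1 - Pt := by linarith
          rw [hPfe]
          nlinarith [sq_nonneg Pt, mul_nonneg (mul_nonneg hPt hPt) (by linarith : (0:ℝ) ≤ 1 - Pt)]
  · -- not case A
    push_neg at hA
    have hUcd : U0 * (cf * df) ≤ 1 :=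
      le_trans (mul_le_mul_of_nonneg_right hU0S (by positivity)) IH0
    rcases le_or_gt (cf * dt) (ct * df) with hB | hB
    · -- case B : use S1
      have h2ct : cf ≤ 2 * ct := by
        by_contra hcon
        push_neg at hcon
        have hdd : df < 2 * dt := hA (by linarith)
        nlinarith
      have hctpos : 0 < ct := by linarith
      obtain ⟨S1, hS1n, hU1S1, IH1⟩ := h1 hctpos
      have hU1cd : U1 * (ct * df) ≤ 1 :=
        le_trans (mul_le_mul_of_nonneg_right hU1S1 (by positivity)) IH1
      have hWK : (Pf * U0 + Pt * U1) * (cf * (ct * df)) ≤ Pf * ct + Pt * cf := by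
        have expand : (Pf * U0 + Pt * U1) * (cf * (ct * df))
            = Pf * ct * (U0 * (cf * df)) + Pt * cf * (U1 * (ct * df)) := by ring
        rw [expand]
        have b1 : Pf * ct * (U0 * (cf * df)) ≤ Pf * ct * 1 :=
          mul_le_mul_of_nonneg_left hUcd (by positivity)
        have b2 : Pt * cf * (U1 * (ct * df)) ≤ Pt * cf * 1 :=
          mul_le_mul_of_nonneg_left hU1cd (by positivity)
        linarith [b1, b2]
      exact keyB Pf Pt (Pf * U0 + Pt * U1) cf ct df dt hPf hPt hsum hW hcf hdf hctpos hdt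
        hctcf h2ct hdtdf hB hWK
    · -- case C : use S2
      have h2dt : df ≤ 2 * dt := by
        by_contra hcon
        push_neg at hcon
        have hcc : df < 2 * dt := hA (by nlinarith)
        linarith
      have hdtpos : 0 < dt := by linarith
      obtain ⟨S2, hS2n, hU1S2, IH2⟩ := h2 hdtpos
      have hU1cd : U1 * (cf * dt) ≤ 1 :=
        le_trans (mul_le_mul_of_nonneg_right hU1S2 (by positivity)) IH2
      have hWK : (Pf * U0 + Pt * U1) * (df * (dt * cf)) ≤ Pf * dt + Pt * df := by
        have expand : (Pf * U0 + Pt * U1) * (df * (dt * cf))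
            = Pf * dt * (U0 * (cf * df)) + Pt * df * (U1 * (cf * dt)) := by ring
        rw [expand]
        have b1 : Pf * dt * (U0 * (cf * df)) ≤ Pf * dt * 1 :=
          mul_le_mul_of_nonneg_left hUcd (by positivity)
        have b2 : Pt * df * (U1 * (cf * dt)) ≤ Pt * df * 1 :=
          mul_le_mul_of_nonneg_left hU1cd (by positivity)
        linarith [b1, b2]
      have := keyB Pf Pt (Pf * U0 + Pt * U1) df dt cf ct hPf hPt hsum hW hdf hcf hdtpos hct
        hdtdf h2dt hctcf (by linarith [hB] : df * ct ≤ dt * cf) hWK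
      calc (Pf * U0 + Pt * U1) * ((Pf * cf + Pt * ct) * (Pf * df + Pt * dt))
          = (Pf * U0 + Pt * U1) * ((Pf * df + Pt * dt) * (Pf * cf + Pt * ct)) := by ring
        _ ≤ 1 := this



lemma sum_mem_split {n : ℕ} (p : Fin (n+1) → Bool → ℝ) (C : Finset (Fin (n+1) → Bool)) :
    ∑ u ∈ C, wt p u
      = p 0 false * (∑ y ∈ sect false C, wt (fun i => p i.succ) y)
        + p 0 true * (∑ y ∈ sect true C, wt (fun i => p i.succ) y) := by
  have h1 : ∀ b : Bool, ∑ y ∈ sect b C, wt (fun i => p i.succ) y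
      = ∑ y : Fin n → Bool, if Fin.cons b y ∈ C then wt (fun i => p i.succ) y else 0 := by
    intro b
    rw [sect, sum_filter]
  have h2 : ∑ u ∈ C, wt p u = ∑ u : Fin (n+1) → Bool, if u ∈ C then wt p u else 0 := by
    rw [sum_ite_mem, univ_inter]
  rw [h2, sum_succ (fun u => if u ∈ C then wt p u else 0)]
  rw [h1, h1, mul_sum, mul_sum]
  congr 1
  · apply Finset.sum_congr rfl
    intro y _
    by_cases h : Fin.cons false y ∈ C <;> simp [h, wt_cons]
  · apply Finset.sum_congr rfl
    intro y _
    by_cases h : Fin.cons true y ∈ C <;> simp [h, wt_cons]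

theorem core : ∀ (n : ℕ) (p : Fin n → Bool → ℝ), (∀ i b, 0 ≤ p i b) →
    (∀ i, p i false + p i true = 1) →
    ∀ C D : Finset (Fin n → Bool), C.Nonempty → D.Nonempty → Down C → Down D →
    TS p C D * ((∑ u ∈ C, wt p u) * (∑ v ∈ D, wt p v)) ≤ 1 := by
  intro n
  induction n with
  | zero =>
    intro p hp hp1 C D hC hD _ _
    obtain ⟨c, hc⟩ := hC
    obtain ⟨d, hd⟩ := hD
    have hwt : ∀ x : Fin 0 → Bool, wt p x = 1 := fun x => by simp [wt]
    have hhh : ∀ x, hh C D x = 0 := by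
      intro x
      have h1 := hh_le x hc hd
      have hcnt : cnt x c d = 0 := by simp [cnt]
      omega
    have hC' : C = univ := Finset.eq_univ_of_forall fun x => by
      have hxc : x = c := funext fun i => i.elim0
      rwa [hxc]
    have hD' : D = univ := Finset.eq_univ_of_forall fun x => by
      have hxd : x = d := funext fun i => i.elim0
      rwa [hxd]
    have hsum1 : (∑ u ∈ C, wt p u) = 1 := by rw [hC']; simp [hwt]
    have hsum2 : (∑ v ∈ D, wt p v) = 1 := by rw [hD']; simp [hwt]
    have hts : TS p C D = 1 := by rw [TS]; simp [hwt, hhh]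
    rw [hsum1, hsum2, hts]
    norm_num
  | succ n IH =>
    intro p hp hp1 C D hC hD hdC hdD
    set p' : Fin n → Bool → ℝ := fun i => p i.succ with hp'def
    have hp'n : ∀ i b, 0 ≤ p' i b := fun i b => hp i.succ b
    have hp'1 : ∀ i, p' i false + p' i true = 1 := fun i => hp1 i.succ
    set Cf := sect false C with hCf
    set Ct := sect true C with hCt
    set Df := sect false D with hDf
    set Dt := sect true D with hDt
    have hCfne : Cf.Nonempty := sect_false_nonempty hC hdC
    have hDfne : Df.Nonempty := sect_false_nonempty hD hdD
    have hCfd : Down Cf := sect_down hdC false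
    have hCtd : Down Ct := sect_down hdC true
    have hDfd : Down Df := sect_down hdD false
    have hDtd : Down Dt := sect_down hdD true
    set U0 : ℝ := ∑ y : Fin n → Bool, wt p' y * 2 ^ hh C D (Fin.cons false y) with hU0def
    set U1 : ℝ := ∑ y : Fin n → Bool, wt p' y * 2 ^ hh C D (Fin.cons true y) with hU1def
    have hTS : TS p C D = p 0 false * U0 + p 0 true * U1 := by
      rw [TS, sum_succ (fun x => wt p x * 2 ^ hh C D x), hU0def, hU1def, mul_sum, mul_sum]
      congr 1 <;> apply Finset.sum_congr rfl <;> intro y _ <;> rw [wt_cons] <;> ring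
    have hU0nn : 0 ≤ U0 := Finset.sum_nonneg fun y _ =>
      mul_nonneg (wt_nonneg hp'n y) (by positivity)
    have hU1nn : 0 ≤ U1 := Finset.sum_nonneg fun y _ =>
      mul_nonneg (wt_nonneg hp'n y) (by positivity)
    have hU0S : U0 ≤ TS p' Cf Df := by
      apply Finset.sum_le_sum
      intro y _
      exact mul_le_mul_of_nonneg_left
        (pow_le_pow_right₀ one_le_two (hh_cons_false y hCfne hDfne)) (wt_nonneg hp'n y)
    have hU1S0 : U1 ≤ 2 * TS p' Cf Df := by
      rw [TS, mul_sum]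
      apply Finset.sum_le_sum
      intro y _
      have := hh_cons_true_both y hCfne hDfne
      calc wt p' y * 2 ^ hh C D (Fin.cons true y)
          ≤ wt p' y * 2 ^ (hh Cf Df y + 1) :=
            mul_le_mul_of_nonneg_left (pow_le_pow_right₀ one_le_two this) (wt_nonneg hp'n y)
        _ = 2 * (wt p' y * 2 ^ hh Cf Df y) := by rw [pow_succ]; ring
    set cf : ℝ := ∑ y ∈ Cf, wt p' y with hcfdef
    set ct : ℝ := ∑ y ∈ Ct, wt p' y with hctdef
    set df : ℝ := ∑ y ∈ Df, wt p' y with hdfdef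
    set dt : ℝ := ∑ y ∈ Dt, wt p' y with hdtdef
    have hctnn : 0 ≤ ct := Finset.sum_nonneg fun y _ => wt_nonneg hp'n y
    have hdtnn : 0 ≤ dt := Finset.sum_nonneg fun y _ => wt_nonneg hp'n y
    have hctcf : ct ≤ cf :=
      Finset.sum_le_sum_of_subset_of_nonneg (sect_subset hdC) fun y _ _ => wt_nonneg hp'n y
    have hdtdf : dt ≤ df :=
      Finset.sum_le_sum_of_subset_of_nonneg (sect_subset hdD) fun y _ _ => wt_nonneg hp'n y
    have IH0 : TS p' Cf Df * (cf * df) ≤ 1 := by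
      have := IH p' hp'n hp'1 Cf Df hCfne hDfne hCfd hDfd
      linarith [this]
    have hS0nn : 0 ≤ TS p' Cf Df := TS_nonneg hp'n Cf Df
    have hkey1 : 0 < ct → ∃ S1, 0 ≤ S1 ∧ U1 ≤ S1 ∧ S1 * (ct * df) ≤ 1 := by
      intro hpos
      have hCtne : Ct.Nonempty := by
        by_contra hemp
        rw [not_nonempty_iff_eq_empty] at hemp
        rw [hemp] at hctdef
        simp at hctdef
        exact absurd hctdef (by linarith)
      refine ⟨TS p' Ct Df, TS_nonneg hp'n Ct Df, ?_, ?_⟩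
      · apply Finset.sum_le_sum
        intro y _
        exact mul_le_mul_of_nonneg_left
          (pow_le_pow_right₀ one_le_two (hh_cons_true_left y hCtne hDfne)) (wt_nonneg hp'n y)
      · have := IH p' hp'n hp'1 Ct Df hCtne hDfne hCtd hDfd
        linarith [this]
    have hkey2 : 0 < dt → ∃ S2, 0 ≤ S2 ∧ U1 ≤ S2 ∧ S2 * (cf * dt) ≤ 1 := by
      intro hpos
      have hDtne : Dt.Nonempty := by
        by_contra hemp
        rw [not_nonempty_iff_eq_empty] at hemp
        rw [hemp] at hdtdef
        simp at hdtdef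
        exact absurd hdtdef (by linarith)
      refine ⟨TS p' Cf Dt, TS_nonneg hp'n Cf Dt, ?_, ?_⟩
      · apply Finset.sum_le_sum
        intro y _
        exact mul_le_mul_of_nonneg_left
          (pow_le_pow_right₀ one_le_two (hh_cons_true_right y hCfne hDtne)) (wt_nonneg hp'n y)
      · have := IH p' hp'n hp'1 Cf Dt hCfne hDtne hCfd hDtd
        have e : TS p' Cf Dt * (cf * dt) = TS p' Cf Dt * (cf * dt) := rfl
        linarith [this]
    rw [hTS, sum_mem_split p C, sum_mem_split p D]
    exact key (p 0 false) (p 0 true) (TS p' Cf Df) U0 U1 cf ct df dt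
      (hp 0 false) (hp 0 true) (hp1 0) hU0nn hU1nn hS0nn hU0S
      hctnn hctcf hdtnn hdtdf IH0 hU1S0 hkey1 hkey2

variable {n : ℕ} {f : Finset (Fin n) → ℝ}

lemma f_union_le (hmarg : ∀ (A : Finset (Fin n)) (j : Fin n),
      0 ≤ f (insert j A) - f A ∧ f (insert j A) - f A ≤ 1) (A T : Finset (Fin n)) :
    f A ≤ f (A ∪ T) ∧ f (A ∪ T) ≤ f A + T.card := by
  induction T using Finset.induction_on with
  | empty => simp
  | @insert j T hj IHT =>
    have hins : A ∪ insert j T = insert j (A ∪ T) := by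
      rw [Finset.union_insert]
    have h1 := hmarg (A ∪ T) j
    constructor
    · rw [hins]
      linarith [IHT.1, h1.1]
    · rw [hins, Finset.card_insert_of_notMem hj]
      push_cast
      linarith [IHT.2, h1.2]

lemma f_mono (hmarg : ∀ (A : Finset (Fin n)) (j : Fin n),
      0 ≤ f (insert j A) - f A ∧ f (insert j A) - f A ≤ 1)
    {A B : Finset (Fin n)} (hAB : A ⊆ B) : f A ≤ f B := by
  have := (f_union_le hmarg A B).1
  rwa [Finset.union_eq_right.2 hAB] at this

lemma f_split (hsub : ∀ A B : Finset (Fin n), f (A ∪ B) ≤ f A + f B)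
    (hmarg : ∀ (A : Finset (Fin n)) (j : Fin n),
      0 ≤ f (insert j A) - f A ∧ f (insert j A) - f A ≤ 1)
    (S U V : Finset (Fin n)) :
    f S ≤ f U + f V + ((S \ (U ∪ V)).card : ℝ) := by
  have hsubset : S ⊆ (S ∩ U) ∪ ((S ∩ V) ∪ (S \ (U ∪ V))) := by
    intro i hi
    by_cases hU : i ∈ U
    · exact Finset.mem_union_left _ (Finset.mem_inter.2 ⟨hi, hU⟩)
    by_cases hV : i ∈ V
    · exact Finset.mem_union_right _ (Finset.mem_union_left _ (Finset.mem_inter.2 ⟨hi, hV⟩))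
    · exact Finset.mem_union_right _ (Finset.mem_union_right _
        (Finset.mem_sdiff.2 ⟨hi, fun h => (Finset.mem_union.1 h).elim hU hV⟩))
  calc f S ≤ f ((S ∩ U) ∪ ((S ∩ V) ∪ (S \ (U ∪ V)))) := f_mono hmarg hsubset
    _ ≤ f (S ∩ U) + f ((S ∩ V) ∪ (S \ (U ∪ V))) := hsub _ _
    _ ≤ f (S ∩ U) + (f (S ∩ V) + ((S \ (U ∪ V)).card : ℝ)) := by
        linarith [(f_union_le hmarg (S ∩ V) (S \ (U ∪ V))).2]
    _ ≤ f U + f V + ((S \ (U ∪ V)).card : ℝ) := by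
        linarith [f_mono hmarg (Finset.inter_subset_right : S ∩ U ⊆ U),
          f_mono hmarg (Finset.inter_subset_right : S ∩ V ⊆ V)]


end SchechtmanAux

open SchechtmanAux

/-- Consequence of Schechtman's inequality with `q = 2`. -/
theorem subadditive_median_tail
    {Ω : Type*} [MeasurableSpace Ω] (μ : Measure Ω) [IsProbabilityMeasure μ]
    {n : ℕ} (X : Fin n → Ω → Bool) (hXm : ∀ i, Measurable (X i))
    (hXind : iIndepFun X μ)
    (f : Finset (Fin n) → ℝ)
    (hnonneg : ∀ A : Finset (Fin n), 0 ≤ f A)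
    (hsub : ∀ A B : Finset (Fin n), f (A ∪ B) ≤ f A + f B)
    (hmarg : ∀ (A : Finset (Fin n)) (j : Fin n),
      0 ≤ f (insert j A) - f A ∧ f (insert j A) - f A ≤ 1)
    (Z : Ω → ℝ) (hZ : ∀ ω, Z ω = f (univ.filter fun i => X i ω = true))
    (a : ℝ) (hmed : (1 : ℝ) / 2 ≤ (μ {ω | Z ω ≤ a}).toReal)
    (k : ℕ) (hk1 : 1 ≤ k) (hkn : k ≤ n) :
    (μ {ω | 3 * a + k ≤ Z ω}).toReal ≤ (2 : ℝ) ^ ((2 : ℤ) - k) := by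
  classical
  set XX : Ω → (Fin n → Bool) := fun ω i => X i ω with hXXdef
  set suppF : (Fin n → Bool) → Finset (Fin n) :=
    fun x => univ.filter (fun i => x i = true) with hsuppdef
  set p : Fin n → Bool → ℝ := fun i b => (μ ((X i) ⁻¹' {b})).toReal with hpdef
  have hpnn : ∀ i b, 0 ≤ p i b := fun i b => ENNReal.toReal_nonneg
  have hp1 : ∀ i, p i false + p i true = 1 := by
    intro i
    have hcomp : (X i) ⁻¹' {false} = ((X i) ⁻¹' {true})ᶜ := by
      ext ω; simp [Bool.not_eq_true]
    have hadd : μ ((X i) ⁻¹' {true}) + μ ((X i) ⁻¹' {false}) = 1 := by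
      rw [hcomp, measure_add_measure_compl ((hXm i) (measurableSet_singleton _)),
        measure_univ]
    have := congrArg ENNReal.toReal hadd
    rw [ENNReal.toReal_add (measure_ne_top μ _) (measure_ne_top μ _)] at this
    simp only [ENNReal.toReal_one] at this
    simp only [hpdef]
    linarith
  -- singleton preimage product formula
  have hsingle : ∀ x : Fin n → Bool, (μ (XX ⁻¹' {x})).toReal = wt p x := by
    intro x
    have hpre : XX ⁻¹' {x} = ⋂ i, (X i) ⁻¹' {x i} := by
      ext ω
      simp only [Set.mem_preimage, Set.mem_singleton_iff, Set.mem_iInter, funext_iff]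
      exact Iff.rfl
    have hprod := hXind.measure_inter_preimage_eq_mul Finset.univ
      (sets := fun i => {x i}) (fun i _ => measurableSet_singleton _)
    simp only [Finset.mem_univ, Set.iInter_true, Set.iInter_iInter_eq_left] at hprod
    rw [hpre, hprod, ENNReal.toReal_prod]
    rfl
  -- finset preimage sum formula
  have hset : ∀ S : Finset (Fin n → Bool),
      (μ {ω | XX ω ∈ S}).toReal = ∑ x ∈ S, wt p x := by
    intro S
    have hU : {ω | XX ω ∈ S} = ⋃ x ∈ S, XX ⁻¹' {x} := by
      ext ω
      simp
    have hdisj : (↑S : Set (Fin n → Bool)).PairwiseDisjoint (fun x => XX ⁻¹' {x}) := by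
      intro x _ y _ hxy
      apply Set.disjoint_left.2
      intro ω h1 h2
      exact hxy (h1.symm.trans h2)
    have hXXm : Measurable XX := measurable_pi_iff.2 fun i => hXm i
    have : μ (⋃ x ∈ S, XX ⁻¹' {x}) = ∑ x ∈ S, μ (XX ⁻¹' {x}) := measure_biUnion_finset hdisj
      (fun x _ => hXXm (measurableSet_singleton x))
    rw [hU, this, ENNReal.toReal_sum (fun x _ => measure_ne_top μ _)]
    exact Finset.sum_congr rfl fun x _ => hsingle x
  set A' : Finset (Fin n → Bool) := univ.filter (fun x => f (suppF x) ≤ a) with hA'def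
  set B' : Finset (Fin n → Bool) :=
    univ.filter (fun x => 3 * a + (k : ℝ) ≤ f (suppF x)) with hB'def
  have hZeq : ∀ ω, Z ω = f (suppF (XX ω)) := fun ω => hZ ω
  have hmedset : {ω | Z ω ≤ a} = {ω | XX ω ∈ A'} := by
    ext ω
    simp [hA'def, hZeq ω]
  have htailset : {ω | 3 * a + (k:ℝ) ≤ Z ω} = {ω | XX ω ∈ B'} := by
    ext ω
    simp [hB'def, hZeq ω]
  set SA : ℝ := ∑ x ∈ A', wt p x with hSAdef
  set SB : ℝ := ∑ x ∈ B', wt p x with hSBdef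
  have hmed' : 1/2 ≤ SA := by
    rw [hSAdef, ← hset A', ← hmedset]
    exact hmed
  have hSBeq : (μ {ω | 3 * a + (k:ℝ) ≤ Z ω}).toReal = SB := by
    rw [htailset, hset]
  have hSBnn : 0 ≤ SB := Finset.sum_nonneg fun x _ => wt_nonneg hpnn x
  -- A' nonempty, down, a ≥ 0
  have hA'ne : A'.Nonempty := by
    by_contra hemp
    rw [not_nonempty_iff_eq_empty] at hemp
    rw [hSAdef, hemp, Finset.sum_empty] at hmed'
    linarith
  have ha : 0 ≤ a := by
    obtain ⟨x0, hx0⟩ := hA'ne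
    rw [hA'def, Finset.mem_filter] at hx0
    linarith [hnonneg (suppF x0), hx0.2]
  have hA'down : Down A' := by
    intro x hx y hle
    rw [hA'def, Finset.mem_filter] at hx ⊢
    refine ⟨Finset.mem_univ _, le_trans (f_mono hmarg ?_) hx.2⟩
    intro i hi
    rw [hsuppdef] at hi ⊢
    simp only [Finset.mem_filter, Finset.mem_univ, true_and] at hi ⊢
    exact hle i hi
  -- Markov's bound
  have hMarkov : SB * 2 ^ k ≤ TS p A' A' := by
    have hk_le : ∀ x ∈ B', k ≤ hh A' A' x := by
      intro x hx
      obtain ⟨u, hu, v, hv, he⟩ := hh_exists hA'ne hA'ne x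
      rw [← he]
      have hcard : ((suppF x \ (suppF u ∪ suppF v)).card : ℝ) = (cnt x u v : ℝ) := by
        norm_cast
        congr 1
        ext i
        simp [hsuppdef, cnt, Bool.not_eq_true, and_assoc]
      have hfs := f_split hsub hmarg (suppF x) (suppF u) (suppF v)
      rw [hB'def, Finset.mem_filter] at hx
      rw [hA'def, Finset.mem_filter] at hu hv
      have : (k : ℝ) ≤ (cnt x u v : ℝ) := by
        rw [← hcard]
        linarith [hx.2, hu.2, hv.2, hfs, ha]
      exact_mod_cast this
    calc SB * 2 ^ k = ∑ x ∈ B', wt p x * 2 ^ k := by rw [hSBdef, Finset.sum_mul]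
      _ ≤ ∑ x ∈ B', wt p x * 2 ^ hh A' A' x := by
          apply Finset.sum_le_sum
          intro x hx
          exact mul_le_mul_of_nonneg_left
            (pow_le_pow_right₀ one_le_two (hk_le x hx)) (wt_nonneg hpnn x)
      _ ≤ TS p A' A' := by
          rw [TS]
          apply Finset.sum_le_sum_of_subset_of_nonneg (Finset.subset_univ B')
          intro x _ _
          exact mul_nonneg (wt_nonneg hpnn x) (by positivity)
  have hcore := core n p hpnn hp1 A' A' hA'ne hA'ne hA'down hA'down
  -- final arithmetic
  have h2k : (0:ℝ) < 2 ^ k := by positivity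
  have hSB4 : SB * 2 ^ k ≤ 4 := by
    have h1 : SB * 2 ^ k * (SA * SA) ≤ 1 :=
      le_trans (mul_le_mul_of_nonneg_right hMarkov (by nlinarith)) hcore
    have hSA2 : 1/4 ≤ SA * SA := by nlinarith [hmed']
    nlinarith [mul_le_mul_of_nonneg_left hSA2 (mul_nonneg hSBnn h2k.le), h1]
  have hfin : SB ≤ 4 / 2 ^ k := by
    rw [le_div_iff₀ h2k]
    exact hSB4
  have hzpow : (2 : ℝ) ^ ((2 : ℤ) - k) = 4 / 2 ^ k := by
    rw [zpow_sub₀ (two_ne_zero), zpow_natCast]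
    norm_num
  rw [hzpow]
  calc (μ {ω | 3 * a + (k:ℝ) ≤ Z ω}).toReal = SB := hSBeq
    _ ≤ 4 / 2 ^ k := hfin
end
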